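/- Let Ω be a compact metric space that is not finite, let T : Ω → Ω be a minimal homeomorphism, let μ be a T-ergodic Borel probability measure on Ω, and suppose (Ω,T,μ) satisfies the metric repetition property (MRP), i.e., μ(PRP(Ω,T)) > 0. Then there exists a residual subset F of C(Ω,ℝ) (with the uniform metric) such that for every f ∈ F there is a Borel subset Ω_f ⊆ Ω with μ(Ω_f) = 1 such that for every ω ∈ Ω_f, the potential V_ω : ℤ → ℝ defined by V_ω(n) = f(T^n ω) is a Gordon potential. -/

import Mathlib

open Filter Topology MeasureTheory
open scoped ENNReal NNReal

/-- A sequence in a metric space has the repetition property if for every `ε > 0` and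
`r > 0` there is a positive integer `q` such that `dist (u k) (u (k+q)) < ε` for all
`k = 0, 1, …, ⌊r * q⌋`. -/
def RepetitionProperty {Ω : Type*} [PseudoMetricSpace Ω] (u : ℕ → Ω) : Prop :=
  ∀ ε > (0 : ℝ), ∀ r > (0 : ℝ), ∃ q : ℕ, 0 < q ∧
    ∀ k : ℕ, k ≤ ⌊r * q⌋₊ → dist (u k) (u (k + q)) < ε

/-- `PRP T` is the set of points whose forward orbit under `T` has the repetition
property. -/
def PRP {Ω : Type*} [PseudoMetricSpace Ω] (T : Ω → Ω) : Set Ω :=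
  { ω | RepetitionProperty fun k => T^[k] ω }

/-- A bounded function `V : ℤ → ℝ` is a Gordon potential if there are positive integers
`q k → ∞` with `|V n - V (n ± q k)| ≤ k ^ (-(q k))` for all `1 ≤ n ≤ q k` and `k ≥ 1`. -/
def IsGordonPotential (V : ℤ → ℝ) : Prop :=
  (∃ M : ℝ, ∀ n : ℤ, |V n| ≤ M) ∧
  ∃ q : ℕ → ℕ, (∀ k, 0 < q k) ∧ Tendsto q atTop atTop ∧
    ∀ k : ℕ, 1 ≤ k → ∀ n : ℤ, 1 ≤ n → n ≤ (q k : ℤ) →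
      |V n - V (n + q k)| ≤ ((k : ℝ) ^ q k)⁻¹ ∧
      |V n - V (n - q k)| ≤ ((k : ℝ) ^ q k)⁻¹

namespace GordonMRP

variable {Ω : Type*} [MetricSpace Ω] [CompactSpace Ω]

section Iter

variable (T : Ω ≃ₜ Ω)

lemma toEquiv_pow_apply (j : ℕ) (x : Ω) : (T.toEquiv ^ j) x = (⇑T)^[j] x := by
  induction j generalizing x with
  | zero => rfl
  | succ j ih =>
    rw [Function.iterate_succ_apply, pow_succ, Equiv.Perm.mul_apply]
    exact ih (T x)

lemma zpow_coe_apply (j : ℕ) (x : Ω) : (T.toEquiv ^ (j : ℤ)) x = (⇑T)^[j] x := by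
  rw [zpow_natCast]; exact toEquiv_pow_apply T j x

lemma zpow_add_apply (a b : ℤ) (x : Ω) :
    (T.toEquiv ^ (a + b)) x = (T.toEquiv ^ a) ((T.toEquiv ^ b) x) := by
  rw [zpow_add, Equiv.Perm.mul_apply]

lemma zpow_iter_apply (z : ℤ) (j w : ℕ) (h : z + (j : ℤ) = (w : ℤ)) (x : Ω) :
    (T.toEquiv ^ z) ((⇑T)^[j] x) = (⇑T)^[w] x := by
  rw [← zpow_coe_apply T j x, ← zpow_add_apply, h, zpow_coe_apply]

lemma iter_symm_cancel (j : ℕ) (x : Ω) : (⇑T)^[j] ((⇑T.symm)^[j] x) = x := by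
  induction j generalizing x with
  | zero => rfl
  | succ j ih =>
    rw [Function.iterate_succ_apply, Function.iterate_succ_apply']
    rw [T.apply_symm_apply]
    exact ih x

lemma symm_iter_cancel (j : ℕ) (x : Ω) : (⇑T.symm)^[j] ((⇑T)^[j] x) = x := by
  induction j generalizing x with
  | zero => rfl
  | succ j ih =>
    rw [Function.iterate_succ_apply, Function.iterate_succ_apply']
    rw [T.symm_apply_apply]
    exact ih x

end Iter


section PRPfacts

variable (T : Ω ≃ₜ Ω)

lemma prp_mem_of_apply (ω : Ω) (h : T ω ∈ PRP (⇑T)) : ω ∈ PRP (⇑T) := by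
  intro ε hε r hr
  obtain ⟨δ, hδ, hδ'⟩ := Metric.uniformContinuous_iff.mp
    (CompactSpace.uniformContinuous_of_continuous T.symm.continuous) ε hε
  obtain ⟨q, hq, hpair⟩ := h (min δ ε) (lt_min hδ hε) r hr
  refine ⟨q, hq, fun j hj => ?_⟩
  cases j with
  | zero =>
    have h0 := hpair 0 (Nat.zero_le _)
    simp only [Nat.zero_add] at h0
    have h1 : dist ((⇑T)^[0] (T ω)) ((⇑T)^[q] (T ω)) < δ :=
      lt_of_lt_of_le h0 (min_le_left _ _)
    have h2 := hδ' h1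
    simp only [Function.iterate_zero_apply] at h2 ⊢
    have e1 : T.symm (T ω) = ω := T.symm_apply_apply ω
    have e2 : T.symm ((⇑T)^[q] (T ω)) = (⇑T)^[q] ω := by
      rw [← Function.iterate_succ_apply, Function.iterate_succ_apply']
      exact T.symm_apply_apply _
    rw [e1, e2] at h2
    simpa using h2
  | succ j =>
    have hj' : j ≤ ⌊r * q⌋₊ := le_trans (Nat.le_succ j) hj
    have h0 := hpair j hj'
    simp only [] at h0
    have e1 : (⇑T)^[j] (T ω) = (⇑T)^[j + 1] ω := (Function.iterate_succ_apply (⇑T) j ω).symm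
    have e2 : (⇑T)^[j + q] (T ω) = (⇑T)^[j + 1 + q] ω := by
      rw [← Function.iterate_succ_apply]
      congr 1
      omega
    have h4 := lt_of_lt_of_le h0 (min_le_right δ ε)
    rw [e1, e2] at h4
    show dist ((⇑T)^[j + 1] ω) ((⇑T)^[j + 1 + q] ω) < ε
    exact h4

lemma prp_apply_of_mem (ω : Ω) (h : ω ∈ PRP (⇑T)) : T ω ∈ PRP (⇑T) := by
  intro ε hε r hr
  obtain ⟨q, hq, hpair⟩ := h ε hε (r + 1) (by linarith)
  refine ⟨q, hq, fun j hj => ?_⟩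
  have hfloor : j + 1 ≤ ⌊(r + 1) * q⌋₊ := by
    have h1 : (0 : ℝ) ≤ r * q := by positivity
    have h2 : ⌊r * q⌋₊ + q ≤ ⌊(r + 1) * q⌋₊ := by
      have h3 : ((⌊r * q⌋₊ + q : ℕ) : ℝ) ≤ (r + 1) * q := by
        push_cast
        have := Nat.floor_le h1
        nlinarith
      exact Nat.le_floor h3
    omega
  have h0 := hpair (j + 1) hfloor
  have e1 : (⇑T)^[j] (T ω) = (⇑T)^[j + 1] ω := (Function.iterate_succ_apply (⇑T) j ω).symm
  have e2 : (⇑T)^[j + q] (T ω) = (⇑T)^[j + 1 + q] ω := by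
    rw [← Function.iterate_succ_apply]
    congr 1
    omega
  simp only []
  rw [e1, e2]
  simpa using h0

lemma prp_preimage : (⇑T) ⁻¹' PRP (⇑T) = PRP (⇑T) :=
  Set.ext fun ω => ⟨fun h => prp_mem_of_apply T ω h, fun h => prp_apply_of_mem T ω h⟩

lemma prp_iter_preimage (n : ℕ) : ((⇑T)^[n]) ⁻¹' PRP (⇑T) = PRP (⇑T) := by
  induction n with
  | zero => rfl
  | succ n ih =>
    rw [Function.iterate_succ, Set.preimage_comp, ih, prp_preimage]

variable [MeasurableSpace Ω] [BorelSpace Ω]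

lemma prp_ae (μ : Measure Ω) [IsProbabilityMeasure μ] (herg : Ergodic (⇑T) μ)
    (hMRP : 0 < μ (PRP (⇑T))) : μ (PRP (⇑T)) = 1 := by
  set h : Set Ω := toMeasurable μ (PRP (⇑T)) with hh
  have hhm : MeasurableSet h := measurableSet_toMeasurable μ _
  set B : Set Ω := ⋃ N : ℕ, ⋂ n : ℕ, ((⇑T)^[N + n]) ⁻¹' h with hB
  have hmes : ∀ m : ℕ, Measurable ((⇑T)^[m]) :=
    fun m => (herg.toMeasurePreserving.iterate m).measurable
  have hBm : MeasurableSet B :=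
    MeasurableSet.iUnion fun N => MeasurableSet.iInter fun n => hhm.preimage (hmes _)
  have hBinv : (⇑T) ⁻¹' B = B := by
    ext x
    simp only [hB, Set.mem_preimage, Set.mem_iUnion, Set.mem_iInter]
    constructor
    · rintro ⟨N, hN⟩
      refine ⟨N + 1, fun n => ?_⟩
      have h1 := hN n
      rw [← Function.iterate_succ_apply] at h1
      have e : (⇑T)^[N + n + 1] x = (⇑T)^[N + 1 + n] x := by congr 1; omega
      rwa [e] at h1
    · rintro ⟨N, hN⟩
      refine ⟨N, fun n => ?_⟩
      have h1 := hN (n + 1)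
      rw [show N + (n + 1) = N + n + 1 by omega, Function.iterate_succ_apply] at h1
      exact h1
  have hsub : PRP (⇑T) ⊆ B := by
    intro x hx
    refine Set.mem_iUnion.mpr ⟨0, Set.mem_iInter.mpr fun n => ?_⟩
    have h1 : x ∈ ((⇑T)^[0 + n]) ⁻¹' PRP (⇑T) := by
      rw [prp_iter_preimage]; exact hx
    exact Set.preimage_mono (subset_toMeasurable μ _) h1
  have hBle : μ B ≤ μ h := by
    have hmono : Monotone fun N : ℕ => ⋂ n : ℕ, ((⇑T)^[N + n]) ⁻¹' h := by
      intro N M hNM x hx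
      simp only [Set.mem_iInter] at hx ⊢
      intro n
      have := hx (M - N + n)
      rwa [show N + (M - N + n) = M + n by omega] at this
    rw [hB, hmono.measure_iUnion]
    refine iSup_le fun N => ?_
    have h1 : (⋂ n : ℕ, ((⇑T)^[N + n]) ⁻¹' h) ⊆ ((⇑T)^[N + 0]) ⁻¹' h :=
      Set.iInter_subset _ 0
    refine le_trans (measure_mono h1) ?_
    rw [(herg.toMeasurePreserving.iterate (N + 0)).measure_preimage hhm.nullMeasurableSet]
  have hBeq : μ B = μ (PRP (⇑T)) := by
    refine le_antisymm ?_ (measure_mono hsub)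
    exact le_trans hBle (le_of_eq (measure_toMeasurable _))
  rcases herg.toPreErgodic.prob_eq_zero_or_one hBm hBinv with h0 | h1
  · exact absurd (hBeq ▸ h0) (ne_of_gt hMRP)
  · rw [← hBeq, h1]

lemma prp_window (ω : Ω) (hω : ω ∈ PRP (⇑T)) (δ : ℝ) (hδ : 0 < δ) (R k : ℕ) :
    ∃ q : ℕ, k < q ∧ ∀ j : ℕ, j ≤ R * q → dist ((⇑T)^[j] ω) ((⇑T)^[j + q] ω) ≤ δ := by
  have hden : (0 : ℝ) < δ / (k + 1) := by positivity
  have hrpos : (0 : ℝ) < (((R + 1) * (k + 1) : ℕ) : ℝ) := by positivity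
  obtain ⟨q₀, hq₀, hpair⟩ := hω (δ / (k + 1)) hden (((R + 1) * (k + 1) : ℕ) : ℝ) hrpos
  set a : ℕ := k / q₀ + 1 with ha
  have haq : k < a * q₀ := by
    have h1 : k / q₀ * q₀ + k % q₀ = k := Nat.div_add_mod' k q₀
    have h2 : k % q₀ < q₀ := Nat.mod_lt _ hq₀
    have h3 : a * q₀ = k / q₀ * q₀ + q₀ := by rw [ha]; ring
    omega
  have hale : a ≤ k + 1 := by
    have := Nat.div_le_self k q₀
    omega
  have hfloor : ⌊(((R + 1) * (k + 1) : ℕ) : ℝ) * (q₀ : ℝ)⌋₊ = (R + 1) * (k + 1) * q₀ := by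
    rw [← Nat.cast_mul, Nat.floor_natCast]
  refine ⟨a * q₀, haq, fun j hj => ?_⟩
  have chain : ∀ i : ℕ, i ≤ a → dist ((⇑T)^[j] ω) ((⇑T)^[j + i * q₀] ω) ≤ i * (δ / (k + 1)) := by
    intro i hia
    induction i with
    | zero => simp
    | succ i ih =>
      have h1 := ih (le_trans (Nat.le_succ i) hia)
      have hidx : j + i * q₀ ≤ ⌊(((R + 1) * (k + 1) : ℕ) : ℝ) * (q₀ : ℝ)⌋₊ := by
        rw [hfloor]
        have hb1 : j ≤ R * (a * q₀) := hj
        have hb2 : i * q₀ ≤ a * q₀ := Nat.mul_le_mul_right _ (le_trans (Nat.le_succ i) hia)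
        have hb3 : R * (a * q₀) + a * q₀ = (R + 1) * (a * q₀) := by ring
        have hb4 : (R + 1) * (a * q₀) ≤ (R + 1) * ((k + 1) * q₀) :=
          Nat.mul_le_mul_left _ (Nat.mul_le_mul_right _ hale)
        calc j + i * q₀ ≤ R * (a * q₀) + a * q₀ := Nat.add_le_add hb1 hb2
          _ = (R + 1) * (a * q₀) := hb3
          _ ≤ (R + 1) * ((k + 1) * q₀) := hb4
          _ = (R + 1) * (k + 1) * q₀ := by ring
      have h3 := hpair (j + i * q₀) hidx
      simp only [] at h3
      have e : (⇑T)^[j + i * q₀ + q₀] ω = (⇑T)^[j + (i + 1) * q₀] ω := by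
        congr 1
        ring
      rw [e] at h3
      calc dist ((⇑T)^[j] ω) ((⇑T)^[j + (i + 1) * q₀] ω)
          ≤ dist ((⇑T)^[j] ω) ((⇑T)^[j + i * q₀] ω)
            + dist ((⇑T)^[j + i * q₀] ω) ((⇑T)^[j + (i + 1) * q₀] ω) := dist_triangle _ _ _
        _ ≤ i * (δ / (k + 1)) + δ / (k + 1) := add_le_add h1 (le_of_lt h3)
        _ = ((i + 1 : ℕ) : ℝ) * (δ / (k + 1)) := by push_cast; ring
  have hfin := chain a le_rfl
  refine le_trans hfin ?_
  have h1 : (a : ℝ) ≤ (k : ℝ) + 1 := by exact_mod_cast hale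
  have h2 : (0 : ℝ) < (k : ℝ) + 1 := by positivity
  calc (a : ℝ) * (δ / (k + 1)) ≤ ((k : ℝ) + 1) * (δ / (k + 1)) := by
        apply mul_le_mul_of_nonneg_right h1 (le_of_lt hden)
    _ = δ := by field_simp

end PRPfacts


section Tower

variable (T : Ω ≃ₜ Ω) (A : Set Ω) (qc : Ω → ℕ) (m : ℕ)

/-- `y` starts a certified block: its certificate is nonzero and no marker occurs strictly
inside the block. -/
def CertB (y : Ω) : Prop :=
  qc y ≠ 0 ∧ ∀ i, 1 ≤ i → i < m * qc y → (⇑T)^[i] y ∉ A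

open Classical in
/-- length of the block starting at `y`. -/
noncomputable def stp (y : Ω) : ℕ :=
  if CertB T A qc m y ∧ 1 ≤ m * qc y then m * qc y else 1

lemma stp_pos (y : Ω) : 1 ≤ stp T A qc m y := by
  unfold stp; split
  · omega
  · exact le_refl 1

open Classical in
lemma stp_of_cert {y : Ω} (h1 : CertB T A qc m y) (h2 : 1 ≤ m * qc y) :
    stp T A qc m y = m * qc y := if_pos ⟨h1, h2⟩

lemma stp_cases (y : Ω) : (CertB T A qc m y ∧ stp T A qc m y = m * qc y) ∨ stp T A qc m y = 1 := by
  unfold stp; split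
  · rename_i h; exact Or.inl ⟨h.1, rfl⟩
  · exact Or.inr rfl

lemma stp_of_ncert {y : Ω} (h : ¬ CertB T A qc m y) : stp T A qc m y = 1 := by
  unfold stp; rw [if_neg]; tauto

/-- points having a marker in their backward orbit. -/
def EE : Set Ω := {x | ∃ n : ℕ, (⇑T.symm)^[n] x ∈ A}

open Classical in
/-- backward hitting time of the marker set. -/
noncomputable def NV (x : Ω) : ℕ := if h : x ∈ EE T A then Nat.find h else 0

/-- the most recent marker visit. -/
noncomputable def bV (x : Ω) : Ω := (⇑T.symm)^[NV T A x] x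

lemma EE_apply {x : Ω} (h : x ∈ EE T A) : T x ∈ EE T A := by
  obtain ⟨n, hn⟩ := h
  exact ⟨n + 1, by rw [Function.iterate_succ_apply, T.symm_apply_apply]; exact hn⟩

lemma NV_eq_iff {x : Ω} (h : x ∈ EE T A) {n : ℕ} :
    NV T A x = n ↔ ((⇑T.symm)^[n] x ∈ A ∧ ∀ i < n, (⇑T.symm)^[i] x ∉ A) := by
  classical
  rw [NV, dif_pos h]; exact Nat.find_eq_iff (p := fun n => (⇑T.symm)^[n] x ∈ A) h

lemma NV_spec {x : Ω} (h : x ∈ EE T A) : (⇑T.symm)^[NV T A x] x ∈ A := by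
  classical
  rw [NV, dif_pos h]; exact Nat.find_spec h

lemma NV_min {x : Ω} (h : x ∈ EE T A) {i : ℕ} (hi : i < NV T A x) :
    (⇑T.symm)^[i] x ∉ A := by
  classical
  rw [NV, dif_pos h] at hi
  exact Nat.find_min h hi

lemma NV_zero_iff {x : Ω} (h : x ∈ EE T A) : NV T A x = 0 ↔ x ∈ A := by
  rw [NV_eq_iff T A h]
  constructor
  · exact fun h' => h'.1
  · exact fun h' => ⟨h', by omega⟩

lemma bV_mem {x : Ω} (h : x ∈ EE T A) : bV T A x ∈ A := NV_spec T A h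

lemma iter_bV {x : Ω} : (⇑T)^[NV T A x] (bV T A x) = x := iter_symm_cancel T _ x

lemma NV_succ {x : Ω} (hx : x ∈ EE T A) (hTx : T x ∉ A) :
    NV T A (T x) = NV T A x + 1 ∧ bV T A (T x) = bV T A x := by
  have hTE : T x ∈ EE T A := EE_apply T A hx
  have key : ∀ i : ℕ, (⇑T.symm)^[i + 1] (T x) = (⇑T.symm)^[i] x := by
    intro i
    rw [Function.iterate_succ_apply, T.symm_apply_apply]
  have hN : NV T A (T x) = NV T A x + 1 := by
    rw [NV_eq_iff T A hTE]
    constructor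
    · rw [key]; exact NV_spec T A hx
    · intro i hi
      cases i with
      | zero => simpa using hTx
      | succ i =>
        rw [key]
        exact NV_min T A hx (by omega)
  refine ⟨hN, ?_⟩
  rw [bV, bV, hN, key]

lemma NV_pred {x : Ω} (hx : x ∈ EE T A) (hxA : x ∉ A) :
    T.symm x ∈ EE T A ∧ NV T A (T.symm x) = NV T A x - 1 ∧ bV T A (T.symm x) = bV T A x := by
  have hN1 : 1 ≤ NV T A x := by
    rcases Nat.eq_zero_or_pos (NV T A x) with h0 | h1
    · exact absurd ((NV_zero_iff T A hx).mp h0) hxA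
    · exact h1
  have key : ∀ i : ℕ, (⇑T.symm)^[i] (T.symm x) = (⇑T.symm)^[i + 1] x := by
    intro i
    rw [Function.iterate_succ_apply]
  have hsE : T.symm x ∈ EE T A := by
    refine ⟨NV T A x - 1, ?_⟩
    rw [key, show NV T A x - 1 + 1 = NV T A x by omega]
    exact NV_spec T A hx
  have hN : NV T A (T.symm x) = NV T A x - 1 := by
    rw [NV_eq_iff T A hsE]
    constructor
    · rw [key, show NV T A x - 1 + 1 = NV T A x by omega]
      exact NV_spec T A hx
    · intro i hi
      rw [key]
      exact NV_min T A hx (by omega)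
  refine ⟨hsE, hN, ?_⟩
  rw [bV, bV, hN, key, show NV T A x - 1 + 1 = NV T A x by omega]

/-- iterated block starts above a base point. -/
noncomputable def uB : ℕ → Ω → Ω
  | 0, b => b
  | j + 1, b => (⇑T)^[stp T A qc m (uB j b)] (uB j b)

/-- times of the iterated block starts. -/
noncomputable def tB : ℕ → Ω → ℕ
  | 0, _ => 0
  | j + 1, b => tB j b + stp T A qc m (uB T A qc m j b)

lemma uB_eq_iter (j : ℕ) (b : Ω) : uB T A qc m j b = (⇑T)^[tB T A qc m j b] b := by
  induction j with
  | zero => rfl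
  | succ j ih =>
    have h1 : uB T A qc m (j + 1) b
        = (⇑T)^[stp T A qc m (uB T A qc m j b)] (uB T A qc m j b) := rfl
    have h2 : tB T A qc m (j + 1) b
        = tB T A qc m j b + stp T A qc m (uB T A qc m j b) := rfl
    rw [h1, ih, ← Function.iterate_add_apply, h2, ih]
    congr 1
    omega

lemma tB_succ (j : ℕ) (b : Ω) :
    tB T A qc m (j + 1) b = tB T A qc m j b + stp T A qc m (uB T A qc m j b) := rfl

lemma tB_lt_succ (j : ℕ) (b : Ω) : tB T A qc m j b < tB T A qc m (j + 1) b := by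
  rw [tB_succ]
  have := stp_pos T A qc m (uB T A qc m j b)
  omega

lemma tB_mono {j j' : ℕ} (h : j ≤ j') (b : Ω) : tB T A qc m j b ≤ tB T A qc m j' b := by
  induction j' with
  | zero => simp_all
  | succ j' ih =>
    rcases Nat.lt_or_ge j (j' + 1) with h1 | h2
    · exact le_trans (ih (by omega)) (le_of_lt (tB_lt_succ T A qc m j' b))
    · have : j = j' + 1 := by omega
      subst this; rfl

lemma le_tB (j : ℕ) (b : Ω) : j ≤ tB T A qc m j b := by
  induction j with
  | zero => simp [tB]
  | succ j ih =>
    have := tB_lt_succ T A qc m j b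
    omega

lemma tB_exists (x : Ω) : ∃ j : ℕ, NV T A x < tB T A qc m (j + 1) (bV T A x) := by
  refine ⟨NV T A x, ?_⟩
  have := le_tB T A qc m (NV T A x + 1) (bV T A x)
  omega

/-- block index of `x` above its base. -/
noncomputable def JB (x : Ω) : ℕ := Nat.find (tB_exists T A qc m x)

/-- start of the block of `x`. -/
noncomputable def bsB (x : Ω) : Ω := uB T A qc m (JB T A qc m x) (bV T A x)

/-- offset of `x` in its block. -/
noncomputable def offB (x : Ω) : ℕ := NV T A x - tB T A qc m (JB T A qc m x) (bV T A x)

lemma JB_spec₂ (x : Ω) : NV T A x < tB T A qc m (JB T A qc m x + 1) (bV T A x) :=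
  Nat.find_spec (tB_exists T A qc m x)

lemma JB_spec₁ (x : Ω) : tB T A qc m (JB T A qc m x) (bV T A x) ≤ NV T A x := by
  rcases Nat.eq_zero_or_pos (JB T A qc m x) with h0 | h1
  · rw [h0]; show tB T A qc m 0 _ ≤ _; simp [tB]
  · have hmin := Nat.find_min (tB_exists T A qc m x) (show JB T A qc m x - 1 < JB T A qc m x by omega)
    rw [show JB T A qc m x - 1 + 1 = JB T A qc m x by omega] at hmin
    omega

lemma JB_uniq {x : Ω} {j : ℕ} (h1 : tB T A qc m j (bV T A x) ≤ NV T A x)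
    (h2 : NV T A x < tB T A qc m (j + 1) (bV T A x)) : JB T A qc m x = j := by
  have hle : JB T A qc m x ≤ j := Nat.find_min' (tB_exists T A qc m x) h2
  rcases Nat.lt_or_ge (JB T A qc m x) j with hlt | hge
  · exfalso
    have := tB_mono T A qc m (show JB T A qc m x + 1 ≤ j by omega) (bV T A x)
    have := JB_spec₂ T A qc m x
    omega
  · omega

lemma NV_eq_tB_add_offB (x : Ω) :
    NV T A x = tB T A qc m (JB T A qc m x) (bV T A x) + offB T A qc m x := by
  have := JB_spec₁ T A qc m x
  rw [offB]
  omega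

lemma x_eq_iter_bsB (x : Ω) : x = (⇑T)^[offB T A qc m x] (bsB T A qc m x) := by
  rw [bsB, uB_eq_iter, ← Function.iterate_add_apply]
  conv_lhs => rw [← iter_bV T A (x := x)]
  congr 1
  rw [NV_eq_tB_add_offB T A qc m x]
  omega

lemma offB_lt_stp (x : Ω) : offB T A qc m x < stp T A qc m (bsB T A qc m x) := by
  have h2 := JB_spec₂ T A qc m x
  rw [tB_succ] at h2
  have := JB_spec₁ T A qc m x
  rw [offB, bsB]
  omega

lemma succ_block {x : Ω} (hx : x ∈ EE T A)
    (ho : offB T A qc m x + 1 < stp T A qc m (bsB T A qc m x)) :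
    T x ∈ EE T A ∧ bsB T A qc m (T x) = bsB T A qc m x ∧
      offB T A qc m (T x) = offB T A qc m x + 1 := by
  have hcert : CertB T A qc m (bsB T A qc m x) ∧
      stp T A qc m (bsB T A qc m x) = m * qc (bsB T A qc m x) := by
    rcases stp_cases T A qc m (bsB T A qc m x) with h | h
    · exact h
    · omega
  have hTxA : T x ∉ A := by
    have hx_eq := x_eq_iter_bsB T A qc m x
    have : T x = (⇑T)^[offB T A qc m x + 1] (bsB T A qc m x) := by
      rw [Function.iterate_succ_apply']
      exact congrArg T hx_eq
    rw [this]
    exact hcert.1.2 _ (by omega) (by omega)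
  obtain ⟨hN, hb⟩ := NV_succ T A hx hTxA
  have hTE : T x ∈ EE T A := EE_apply T A hx
  have hJ : JB T A qc m (T x) = JB T A qc m x := by
    apply JB_uniq
    · rw [hb, hN]
      have := JB_spec₁ T A qc m x
      omega
    · rw [hb, hN, tB_succ]
      have h3 := NV_eq_tB_add_offB T A qc m x
      simp only [bsB] at ho
      omega
  refine ⟨hTE, ?_, ?_⟩
  · rw [bsB, hJ, hb, bsB]
  · rw [offB, hJ, hb, hN, offB]
    have := JB_spec₁ T A qc m x
    omega

lemma pred_block {x : Ω} (hx : x ∈ EE T A) (ho : 1 ≤ offB T A qc m x) :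
    T.symm x ∈ EE T A ∧ bsB T A qc m (T.symm x) = bsB T A qc m x ∧
      offB T A qc m (T.symm x) = offB T A qc m x - 1 := by
  have hxA : x ∉ A := by
    intro hmem
    have h0 : NV T A x = 0 := (NV_zero_iff T A hx).mpr hmem
    have := NV_eq_tB_add_offB T A qc m x
    omega
  obtain ⟨hsE, hN, hb⟩ := NV_pred T A hx hxA
  have hNx : 1 ≤ NV T A x := by
    have := NV_eq_tB_add_offB T A qc m x
    omega
  have hJ : JB T A qc m (T.symm x) = JB T A qc m x := by
    apply JB_uniq
    · rw [hb, hN]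
      have := JB_spec₁ T A qc m x
      have := NV_eq_tB_add_offB T A qc m x
      omega
    · rw [hb, hN]
      have := JB_spec₂ T A qc m x
      omega
  refine ⟨hsE, ?_, ?_⟩
  · rw [bsB, hJ, hb, bsB]
  · rw [offB, hJ, hb, hN, offB]
    omega

lemma junk_block {x : Ω} (hnc : ¬ CertB T A qc m (bsB T A qc m x)) :
    x = bsB T A qc m x := by
  have h1 : stp T A qc m (bsB T A qc m x) = 1 := stp_of_ncert T A qc m hnc
  have h2 := offB_lt_stp T A qc m x
  have h3 : offB T A qc m x = 0 := by omega
  have := x_eq_iter_bsB T A qc m x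
  rw [h3] at this
  exact this

/-- the `l`-th level of the `q`-block tower. -/
def SqB (q l : ℕ) : Set Ω :=
  {x | x ∈ EE T A ∧ CertB T A qc m (bsB T A qc m x) ∧ qc (bsB T A qc m x) = q ∧
    offB T A qc m x = l}

lemma SqB_base {b : Ω} {q : ℕ} (h : b ∈ SqB T A qc m q 0) :
    bsB T A qc m b = b ∧ CertB T A qc m b ∧ qc b = q := by
  obtain ⟨hE, hc, hq, hoff⟩ := h
  have hb : b = bsB T A qc m b := by
    have := x_eq_iter_bsB T A qc m b
    rw [hoff] at this
    exact this
  exact ⟨hb.symm, hb ▸ hc, hb ▸ hq⟩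

lemma mem_SqB_succ {x : Ω} {q l : ℕ} (h : x ∈ SqB T A qc m q l) (hl : l + 1 < m * q) :
    T x ∈ SqB T A qc m q (l + 1) := by
  obtain ⟨hE, hc, hq, hoff⟩ := h
  have hstp : stp T A qc m (bsB T A qc m x) = m * q := by
    rw [stp_of_cert T A qc m hc (by rw [hq]; omega), hq]
  have ho : offB T A qc m x + 1 < stp T A qc m (bsB T A qc m x) := by
    rw [hstp, hoff]; exact hl
  obtain ⟨hTE, hbs, hoff'⟩ := succ_block T A qc m hE ho
  exact ⟨hTE, by rw [hbs]; exact hc, by rw [hbs]; exact hq, by rw [hoff', hoff]⟩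

lemma mem_SqB_pred {x : Ω} {q l : ℕ} (h : x ∈ SqB T A qc m q (l + 1)) :
    T.symm x ∈ SqB T A qc m q l := by
  obtain ⟨hE, hc, hq, hoff⟩ := h
  obtain ⟨hsE, hbs, hoff'⟩ := pred_block T A qc m hE (by omega)
  exact ⟨hsE, by rw [hbs]; exact hc, by rw [hbs]; exact hq, by rw [hoff', hoff]; omega⟩

lemma SqB_preimage {q l : ℕ} (hl : l + 1 < m * q) :
    (⇑T) ⁻¹' (SqB T A qc m q (l + 1)) = SqB T A qc m q l := by
  ext x
  constructor
  · intro hx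
    have h1 := mem_SqB_pred T A qc m (Set.mem_preimage.mp hx)
    rwa [T.symm_apply_apply] at h1
  · intro hx
    exact Set.mem_preimage.mpr (mem_SqB_succ T A qc m hx hl)

lemma SqB_iter_mem {b : Ω} {q : ℕ} (hb : b ∈ SqB T A qc m q 0) :
    ∀ l, l < m * q → (⇑T)^[l] b ∈ SqB T A qc m q l := by
  intro l
  induction l with
  | zero => intro _; exact hb
  | succ l ih =>
    intro hl
    rw [Function.iterate_succ_apply']
    exact mem_SqB_succ T A qc m (ih (by omega)) hl

lemma cover_cert {x : Ω} (hx : x ∈ EE T A) (hc : CertB T A qc m (bsB T A qc m x)) :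
    x ∈ SqB T A qc m (qc (bsB T A qc m x)) (offB T A qc m x) :=
  ⟨hx, hc, rfl, rfl⟩

lemma cover_junk {x : Ω} (hnc : ¬ CertB T A qc m (bsB T A qc m x)) :
    ¬ CertB T A qc m x := by
  have := junk_block T A qc m hnc
  rw [this]
  exact hnc

lemma SqB_subset_iter_base {x : Ω} {q l : ℕ} (h : x ∈ SqB T A qc m q l) :
    (⇑T.symm)^[l] x ∈ SqB T A qc m q 0 ∧ x = (⇑T)^[l] ((⇑T.symm)^[l] x) := by
  have h2 : ∀ l' : ℕ, ∀ x : Ω, x ∈ SqB T A qc m q l' → (⇑T.symm)^[l'] x ∈ SqB T A qc m q 0 := by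
    intro l'
    induction l' with
    | zero => intro x hx; exact hx
    | succ l' ih =>
      intro x hx
      rw [Function.iterate_succ_apply]
      exact ih _ (mem_SqB_pred T A qc m hx)
  exact ⟨h2 l x h, (iter_symm_cancel T l x).symm⟩

end Tower


section TowerMeas

variable (T : Ω ≃ₜ Ω) (A : Set Ω) (qc : Ω → ℕ) (m : ℕ)
variable [MeasurableSpace Ω] [BorelSpace Ω]

lemma meas_iter (j : ℕ) : Measurable ((⇑T)^[j]) :=
  (T.continuous.measurable).iterate j

lemma meas_symm_iter (j : ℕ) : Measurable ((⇑T.symm)^[j]) :=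
  (T.symm.continuous.measurable).iterate j

lemma meas_comp_dyn {β : Type*} [MeasurableSpace β] {F : Ω → ℕ} {S : ℕ → Ω → β}
    (hF : Measurable F) (hS : ∀ n, Measurable (S n)) :
    Measurable fun x => S (F x) x := by
  intro s hs
  have he : (fun x => S (F x) x) ⁻¹' s = ⋃ n : ℕ, (F ⁻¹' {n}) ∩ (S n ⁻¹' s) := by
    ext x
    simp only [Set.mem_preimage, Set.mem_iUnion, Set.mem_inter_iff, Set.mem_singleton_iff]
    constructor
    · intro h
      exact ⟨F x, rfl, h⟩
    · rintro ⟨n, h1, h2⟩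
      rw [h1]
      exact h2
  rw [he]
  exact MeasurableSet.iUnion fun n => (hF (measurableSet_singleton n)).inter (hS n hs)

lemma meas_lt_set {f g : Ω → ℕ} (hf : Measurable f) (hg : Measurable g) :
    MeasurableSet {x | f x < g x} := by
  have he : {x | f x < g x} = ⋃ n : ℕ, (f ⁻¹' {n}) ∩ (g ⁻¹' {v | n < v}) := by
    ext x
    simp only [Set.mem_setOf_eq, Set.mem_iUnion, Set.mem_inter_iff, Set.mem_preimage,
      Set.mem_singleton_iff]
    constructor
    · intro h
      exact ⟨f x, rfl, h⟩
    · rintro ⟨n, h1, h2⟩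
      rw [h1]
      exact h2
  rw [he]
  exact MeasurableSet.iUnion fun n =>
    (hf (measurableSet_singleton n)).inter (hg (Set.to_countable _).measurableSet)

lemma meas_CertB (hA : MeasurableSet A) (hqc : Measurable qc) :
    MeasurableSet {y | CertB T A qc m y} := by
  have he : {y | CertB T A qc m y} =
      ⋃ v : ℕ, (qc ⁻¹' {v}) ∩ ({y : Ω | v ≠ 0} ∩
        ⋂ i ∈ Finset.Ico 1 (m * v), ((⇑T)^[i]) ⁻¹' Aᶜ) := by
    ext y
    simp only [CertB, Set.mem_setOf_eq, Set.mem_iUnion, Set.mem_inter_iff, Set.mem_preimage,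
      Set.mem_singleton_iff, Set.mem_iInter, Finset.mem_Ico, Set.mem_compl_iff]
    constructor
    · rintro ⟨h1, h2⟩
      exact ⟨qc y, rfl, h1, fun i hi => h2 i hi.1 hi.2⟩
    · rintro ⟨v, hv, h1, h2⟩
      subst hv
      exact ⟨h1, fun i hi1 hi2 => h2 i ⟨hi1, hi2⟩⟩
  rw [he]
  refine MeasurableSet.iUnion fun v => (hqc (measurableSet_singleton v)).inter
    (MeasurableSet.inter ?_ ?_)
  · by_cases h : v = 0
    · simp [h]
    · simp [h]
  · exact MeasurableSet.biInter (Set.to_countable _) fun i _ => (meas_iter T i) hA.compl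

lemma meas_stp (hA : MeasurableSet A) (hqc : Measurable qc) : Measurable (stp T A qc m) := by
  classical
  have hmul : Measurable fun y => m * qc y := measurable_from_top.comp hqc
  have hcond : MeasurableSet {y | CertB T A qc m y ∧ 1 ≤ m * qc y} := by
    have : {y | CertB T A qc m y ∧ 1 ≤ m * qc y} =
        {y | CertB T A qc m y} ∩ (fun y => m * qc y) ⁻¹' {v | 1 ≤ v} := by
      ext y; simp [Set.mem_setOf_eq]
    rw [this]
    exact (meas_CertB T A qc m hA hqc).inter (hmul (Set.to_countable _).measurableSet)
  unfold stp
  exact Measurable.ite hcond hmul measurable_const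

lemma meas_EE (hA : MeasurableSet A) : MeasurableSet (EE T A) := by
  have : EE T A = ⋃ n : ℕ, ((⇑T.symm)^[n]) ⁻¹' A := by
    ext x; simp [EE]
  rw [this]
  exact MeasurableSet.iUnion fun n => (meas_symm_iter T n) hA

lemma meas_NV (hA : MeasurableSet A) : Measurable (NV T A) := by
  refine measurable_to_countable' fun n => ?_
  have he : NV T A ⁻¹' {n} =
      ({x | (⇑T.symm)^[n] x ∈ A} ∩ ⋂ i ∈ Finset.range n, {x | (⇑T.symm)^[i] x ∉ A})
      ∪ ((EE T A)ᶜ ∩ {x : Ω | n = 0}) := by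
    ext x
    simp only [Set.mem_preimage, Set.mem_singleton_iff, Set.mem_union, Set.mem_inter_iff,
      Set.mem_setOf_eq, Set.mem_iInter, Finset.mem_range, Set.mem_compl_iff]
    constructor
    · intro h
      by_cases hx : x ∈ EE T A
      · left
        have := (NV_eq_iff T A hx).mp h
        exact ⟨this.1, fun i hi => this.2 i hi⟩
      · right
        refine ⟨hx, ?_⟩
        rw [← h, NV, dif_neg hx]
    · rintro (⟨h1, h2⟩ | ⟨h1, h2⟩)
      · have hx : x ∈ EE T A := ⟨n, h1⟩
        exact (NV_eq_iff T A hx).mpr ⟨h1, fun i hi => h2 i hi⟩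
      · rw [h2, NV, dif_neg h1]
  rw [he]
  refine MeasurableSet.union (MeasurableSet.inter ?_ ?_) (MeasurableSet.inter ?_ ?_)
  · exact (meas_symm_iter T n) hA
  · exact MeasurableSet.biInter (Set.to_countable _) fun i _ =>
      ((meas_symm_iter T i) hA).compl
  · exact (meas_EE T A hA).compl
  · by_cases h : n = 0
    · simp [h]
    · simp [h]

lemma meas_bV (hA : MeasurableSet A) : Measurable (bV T A) :=
  meas_comp_dyn (meas_NV T A hA) fun n => meas_symm_iter T n

lemma meas_uB (hA : MeasurableSet A) (hqc : Measurable qc) (j : ℕ) :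
    Measurable (uB T A qc m j) := by
  induction j with
  | zero => exact measurable_id
  | succ j ih =>
    have : uB T A qc m (j + 1) = fun b =>
        (⇑T)^[stp T A qc m (uB T A qc m j b)] (uB T A qc m j b) := rfl
    rw [this]
    exact meas_comp_dyn ((meas_stp T A qc m hA hqc).comp ih)
      fun n => (meas_iter T n).comp ih

lemma meas_tB (hA : MeasurableSet A) (hqc : Measurable qc) (j : ℕ) :
    Measurable (tB T A qc m j) := by
  induction j with
  | zero => exact measurable_const
  | succ j ih =>
    have : tB T A qc m (j + 1) = fun b =>
        tB T A qc m j b + stp T A qc m (uB T A qc m j b) := rfl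
    rw [this]
    refine measurable_to_countable' fun n => ?_
    have he : (fun b => tB T A qc m j b + stp T A qc m (uB T A qc m j b)) ⁻¹' {n} =
        ⋃ a : ℕ, (tB T A qc m j ⁻¹' {a}) ∩
          ((fun b => stp T A qc m (uB T A qc m j b)) ⁻¹' {v | a + v = n}) := by
      ext b
      simp only [Set.mem_preimage, Set.mem_singleton_iff, Set.mem_iUnion, Set.mem_inter_iff,
        Set.mem_setOf_eq]
      constructor
      · intro h
        exact ⟨tB T A qc m j b, rfl, h⟩
      · rintro ⟨a, h1, h2⟩
        rw [h1]
        exact h2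
    rw [he]
    exact MeasurableSet.iUnion fun a => (ih (measurableSet_singleton a)).inter
      (((meas_stp T A qc m hA hqc).comp (meas_uB T A qc m hA hqc j))
        (Set.to_countable _).measurableSet)

lemma meas_JB (hA : MeasurableSet A) (hqc : Measurable qc) : Measurable (JB T A qc m) := by
  classical
  refine measurable_to_countable' fun j => ?_
  have he : JB T A qc m ⁻¹' {j} =
      {x | NV T A x < tB T A qc m (j + 1) (bV T A x)} ∩
        ⋂ i ∈ Finset.range j, {x | NV T A x < tB T A qc m (i + 1) (bV T A x)}ᶜ := by
    ext x
    simp only [Set.mem_preimage, Set.mem_singleton_iff, Set.mem_inter_iff, Set.mem_setOf_eq,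
      Set.mem_iInter, Finset.mem_range, Set.mem_compl_iff]
    rw [JB, Nat.find_eq_iff]
  rw [he]
  have hlt : ∀ i : ℕ, MeasurableSet {x | NV T A x < tB T A qc m (i + 1) (bV T A x)} := by
    intro i
    exact meas_lt_set (meas_NV T A hA)
      ((meas_tB T A qc m hA hqc (i + 1)).comp (meas_bV T A hA))
  exact (hlt j).inter
    (MeasurableSet.biInter (Set.to_countable _) fun i _ => (hlt i).compl)

lemma meas_bsB (hA : MeasurableSet A) (hqc : Measurable qc) : Measurable (bsB T A qc m) := by
  have : bsB T A qc m = fun x => uB T A qc m (JB T A qc m x) (bV T A x) := rfl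
  rw [this]
  exact meas_comp_dyn (meas_JB T A qc m hA hqc)
    fun j => (meas_uB T A qc m hA hqc j).comp (meas_bV T A hA)

lemma meas_offB (hA : MeasurableSet A) (hqc : Measurable qc) : Measurable (offB T A qc m) := by
  refine measurable_to_countable' fun l => ?_
  have hTJ : Measurable fun x => tB T A qc m (JB T A qc m x) (bV T A x) :=
    meas_comp_dyn (meas_JB T A qc m hA hqc)
      fun j => (meas_tB T A qc m hA hqc j).comp (meas_bV T A hA)
  have he : offB T A qc m ⁻¹' {l} =
      ⋃ n : ℕ, (NV T A ⁻¹' {n}) ∩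
        ((fun x => tB T A qc m (JB T A qc m x) (bV T A x)) ⁻¹' {v | n - v = l}) := by
    ext x
    simp only [Set.mem_preimage, Set.mem_singleton_iff, Set.mem_iUnion, Set.mem_inter_iff,
      Set.mem_setOf_eq, offB]
    constructor
    · intro h
      exact ⟨NV T A x, rfl, h⟩
    · rintro ⟨n, h1, h2⟩
      rw [h1]
      exact h2
  rw [he]
  exact MeasurableSet.iUnion fun n => ((meas_NV T A hA) (measurableSet_singleton n)).inter
    (hTJ (Set.to_countable _).measurableSet)

lemma meas_SqB (hA : MeasurableSet A) (hqc : Measurable qc) (q l : ℕ) :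
    MeasurableSet (SqB T A qc m q l) := by
  have he : SqB T A qc m q l = EE T A ∩
      ((bsB T A qc m ⁻¹' {y | CertB T A qc m y}) ∩
        ((bsB T A qc m ⁻¹' (qc ⁻¹' {q})) ∩ (offB T A qc m ⁻¹' {l}))) := by
    ext x
    simp only [SqB, Set.mem_setOf_eq, Set.mem_inter_iff, Set.mem_preimage,
      Set.mem_singleton_iff]
  rw [he]
  exact (meas_EE T A hA).inter
    (((meas_bsB T A qc m hA hqc) (meas_CertB T A qc m hA hqc)).inter
      (((meas_bsB T A qc m hA hqc) (hqc (measurableSet_singleton q))).inter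
        ((meas_offB T A qc m hA hqc) (measurableSet_singleton l))))

lemma SqB_disjoint {q l q' l' : ℕ} (h : ¬ (q = q' ∧ l = l')) :
    Disjoint (SqB T A qc m q l) (SqB T A qc m q' l') := by
  rw [Set.disjoint_left]
  rintro x ⟨_, _, hq, hl⟩ ⟨_, _, hq', hl'⟩
  exact h ⟨hq ▸ hq'.symm ▸ rfl, hl ▸ hl'.symm ▸ rfl⟩

lemma SqB_measure_const (hA : MeasurableSet A) (hqc : Measurable qc)
    (μ : Measure Ω) (hmp : MeasurePreserving (⇑T) μ μ)
    {q : ℕ} : ∀ l : ℕ, l < m * q → μ (SqB T A qc m q l) = μ (SqB T A qc m q 0) := by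
  intro l
  induction l with
  | zero => intro _; rfl
  | succ l ih =>
    intro hl
    have h1 : (⇑T) ⁻¹' (SqB T A qc m q (l + 1)) = SqB T A qc m q l :=
      SqB_preimage T A qc m hl
    have h2 : μ ((⇑T) ⁻¹' (SqB T A qc m q (l + 1))) = μ (SqB T A qc m q (l + 1)) :=
      hmp.measure_preimage (meas_SqB T A qc m hA hqc q (l + 1)).nullMeasurableSet
    rw [h1] at h2
    rw [← h2]
    exact ih (by omega)

end TowerMeas


section DynAux

variable (T : Ω ≃ₜ Ω)

lemma zpow_negSucc_apply (j : ℕ) (x : Ω) :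
    (T.toEquiv ^ (Int.negSucc j)) x = (⇑T.symm)^[j + 1] x := by
  rw [zpow_negSucc]
  have h : (T.toEquiv ^ (j + 1)) ((⇑T.symm)^[j + 1] x) = x := by
    rw [toEquiv_pow_apply, iter_symm_cancel]
  calc ((T.toEquiv ^ (j + 1))⁻¹) x
      = ((T.toEquiv ^ (j + 1))⁻¹) ((T.toEquiv ^ (j + 1)) ((⇑T.symm)^[j + 1] x)) := by rw [h]
    _ = (⇑T.symm)^[j + 1] x := by simp

variable [MeasurableSpace Ω] [BorelSpace Ω]

lemma mp_symm (μ : Measure Ω) (hmp : MeasurePreserving (⇑T) μ μ) :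
    MeasurePreserving (⇑T.symm) μ μ := by
  have h1 : MeasurePreserving (⇑T.toMeasurableEquiv) μ μ := by
    rwa [Homeomorph.toMeasurableEquiv_coe]
  have h2 := MeasurePreserving.symm _ h1
  rwa [show (⇑T.toMeasurableEquiv.symm) = ⇑T.symm from rfl] at h2

lemma mp_zpow (μ : Measure Ω) (hmp : MeasurePreserving (⇑T) μ μ) (n : ℤ) :
    MeasurePreserving (fun y => (T.toEquiv ^ n) y) μ μ := by
  cases n with
  | ofNat j =>
    have he : (fun y => (T.toEquiv ^ (Int.ofNat j)) y) = (⇑T)^[j] := by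
      funext y
      exact zpow_coe_apply T j y
    rw [he]
    exact hmp.iterate j
  | negSucc j =>
    have he : (fun y => (T.toEquiv ^ (Int.negSucc j)) y) = (⇑T.symm)^[j + 1] := by
      funext y
      exact zpow_negSucc_apply T j y
    rw [he]
    exact (mp_symm T μ hmp).iterate (j + 1)

lemma aperiodic [Infinite Ω]
    (hmin : ∀ ω : Ω, Dense (Set.range fun n : ℤ => (T.toEquiv ^ n) ω))
    (x : Ω) (i : ℕ) (hi : 1 ≤ i) : (⇑T)^[i] x ≠ x := by
  intro heq
  have hfix : (T.toEquiv ^ (i : ℤ)) x = x := by rw [zpow_coe_apply]; exact heq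
  have hfixneg : (T.toEquiv ^ (-(i : ℤ))) x = x := by
    have := congrArg (fun y => (T.toEquiv ^ (-(i : ℤ))) y) hfix
    rw [← zpow_add_apply, neg_add_cancel] at this
    simpa using this.symm
  have hmul : ∀ z : ℤ, (T.toEquiv ^ ((i : ℤ) * z)) x = x := by
    intro z
    induction z using Int.induction_on with
    | zero => simp
    | succ n ih =>
      rw [show (i : ℤ) * (n + 1) = (i : ℤ) + (i : ℤ) * n by ring, zpow_add_apply, ih, hfix]
    | pred n ih =>
      rw [show (i : ℤ) * (-n - 1) = -(i : ℤ) + (i : ℤ) * (-n) by ring, zpow_add_apply, ih,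
        hfixneg]
  have hsub : (Set.range fun n : ℤ => (T.toEquiv ^ n) x) ⊆
      Set.range (fun j : Fin i => (⇑T)^[(j : ℕ)] x) := by
    rintro _ ⟨n, rfl⟩
    have hipos : (0 : ℤ) < (i : ℤ) := by exact_mod_cast hi
    have hdm : n % (i : ℤ) + (i : ℤ) * (n / (i : ℤ)) = n := Int.emod_add_mul_ediv n (i : ℤ)
    have h1 : (T.toEquiv ^ n) x = (T.toEquiv ^ (n % (i : ℤ))) x := by
      conv_lhs => rw [← hdm]
      rw [zpow_add_apply, hmul]
    have h2 : 0 ≤ n % (i : ℤ) := Int.emod_nonneg n (by omega)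
    have h3 : n % (i : ℤ) < (i : ℤ) := Int.emod_lt_of_pos n hipos
    refine ⟨⟨(n % (i : ℤ)).toNat, by omega⟩, ?_⟩
    simp only []
    rw [h1, ← zpow_coe_apply]
    congr 1
    simp [Int.toNat_of_nonneg h2]
  have hfin : (Set.range fun n : ℤ => (T.toEquiv ^ n) x).Finite :=
    Set.Finite.subset (Set.finite_range _) hsub
  have hclosed : IsClosed (Set.range fun n : ℤ => (T.toEquiv ^ n) x) := hfin.isClosed
  have huniv : (Set.range fun n : ℤ => (T.toEquiv ^ n) x) = Set.univ := by
    rw [← hclosed.closure_eq]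
    exact (hmin x).closure_eq
  exact Set.infinite_univ (huniv ▸ hfin)

lemma ball_pos (hmin : ∀ ω : Ω, Dense (Set.range fun n : ℤ => (T.toEquiv ^ n) ω))
    (μ : Measure Ω) [IsProbabilityMeasure μ] (hmp : MeasurePreserving (⇑T) μ μ)
    (x₀ : Ω) (r : ℝ) (hr : 0 < r) : 0 < μ (Metric.closedBall x₀ r) := by
  by_contra h
  push_neg at h
  have h0 : μ (Metric.closedBall x₀ r) = 0 := le_antisymm h zero_le
  have h0' : μ (Metric.ball x₀ r) = 0 :=
    le_antisymm (le_trans (measure_mono Metric.ball_subset_closedBall) h) zero_le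
  have hcov : (Set.univ : Set Ω) ⊆ ⋃ n : ℤ, (fun y => (T.toEquiv ^ n) y) ⁻¹' Metric.ball x₀ r := by
    intro y _
    obtain ⟨z, hz1, hz2⟩ := (hmin y).exists_mem_open Metric.isOpen_ball
      ⟨x₀, Metric.mem_ball_self hr⟩
    obtain ⟨n, rfl⟩ := hz1
    exact Set.mem_iUnion.mpr ⟨n, hz2⟩
  have h1 : (1 : ℝ≥0∞) ≤ ∑' n : ℤ, μ ((fun y => (T.toEquiv ^ n) y) ⁻¹' Metric.ball x₀ r) := by
    calc (1 : ℝ≥0∞) = μ Set.univ := (measure_univ).symm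
      _ ≤ μ (⋃ n : ℤ, (fun y => (T.toEquiv ^ n) y) ⁻¹' Metric.ball x₀ r) := measure_mono hcov
      _ ≤ ∑' n : ℤ, μ ((fun y => (T.toEquiv ^ n) y) ⁻¹' Metric.ball x₀ r) := measure_iUnion_le _
  have hzero : ∀ n : ℤ, μ ((fun y => (T.toEquiv ^ n) y) ⁻¹' Metric.ball x₀ r) = 0 := by
    intro n
    rw [(mp_zpow T μ hmp n).measure_preimage Metric.isOpen_ball.measurableSet.nullMeasurableSet]
    exact h0'
  rw [tsum_congr hzero] at h1
  simp at h1

lemma exists_marker [Infinite Ω]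
    (hmin : ∀ ω : Ω, Dense (Set.range fun n : ℤ => (T.toEquiv ^ n) ω))
    (μ : Measure Ω) [IsProbabilityMeasure μ] (hmp : MeasurePreserving (⇑T) μ μ)
    (L : ℕ) (hL : 1 ≤ L) :
    ∃ A : Set Ω, MeasurableSet A ∧ 0 < μ A ∧ μ A ≤ ((L : ℝ≥0∞) + 1)⁻¹ ∧
      ∀ i, 1 ≤ i → i ≤ L → ∀ x ∈ A, (⇑T)^[i] x ∉ A := by
  have hsep1 : ∀ i : ℕ, ∃ s : ℝ, 0 < s ∧ ∀ x : Ω, 1 ≤ i → s ≤ dist ((⇑T)^[i] x) x := by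
    intro i
    by_cases hi : 1 ≤ i
    · have hcont : Continuous fun x : Ω => dist ((⇑T)^[i] x) x :=
        (T.continuous.iterate i).dist continuous_id
      obtain ⟨x₁, -, hx₁⟩ := isCompact_univ.exists_isMinOn Set.univ_nonempty
        hcont.continuousOn
      exact ⟨dist ((⇑T)^[i] x₁) x₁, dist_pos.mpr (aperiodic T hmin x₁ i hi),
        fun x _ => isMinOn_iff.mp hx₁ x (Set.mem_univ x)⟩
    · exact ⟨1, one_pos, fun x hx => absurd hx hi⟩
  choose sf hsf1 hsf2 using hsep1
  have hne : (Finset.Icc 1 L).Nonempty := ⟨1, by simp [hL]⟩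
  set s : ℝ := (Finset.Icc 1 L).inf' hne sf with hs_def
  have hs_pos : 0 < s := by
    rw [hs_def, Finset.lt_inf'_iff]
    exact fun i _ => hsf1 i
  have hs_le : ∀ i ∈ Finset.Icc 1 L, s ≤ sf i := fun i hi => Finset.inf'_le sf hi
  obtain ⟨x₀⟩ := (inferInstance : Nonempty Ω)
  refine ⟨Metric.closedBall x₀ (s / 3), Metric.isClosed_closedBall.measurableSet,
    ball_pos T hmin μ hmp x₀ (s / 3) (by linarith), ?_, ?_⟩
  · -- smallness via disjoint preimages
    have hdisj : ∀ i1 i2 : ℕ, i1 < i2 → i2 ≤ L →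
        Disjoint ({x | (⇑T.symm)^[i1] x ∈ Metric.closedBall x₀ (s / 3)})
          {x | (⇑T.symm)^[i2] x ∈ Metric.closedBall x₀ (s / 3)} := by
      intro i1 i2 h12 hi2
      rw [Set.disjoint_left]
      rintro x hx1 hx2
      set z := (⇑T.symm)^[i2] x with hz
      have hTz : (⇑T)^[i2 - i1] z = (⇑T.symm)^[i1] x := by
        have : (⇑T.symm)^[i2] x = (⇑T.symm)^[i2 - i1] ((⇑T.symm)^[i1] x) := by
          rw [← Function.iterate_add_apply]
          congr 1
          omega
        rw [hz, this, iter_symm_cancel]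
      have hd : dist ((⇑T)^[i2 - i1] z) z ≤ 2 * (s / 3) := by
        rw [hTz, hz]
        calc dist ((⇑T.symm)^[i1] x) ((⇑T.symm)^[i2] x)
            ≤ dist ((⇑T.symm)^[i1] x) x₀ + dist x₀ ((⇑T.symm)^[i2] x) := dist_triangle _ _ _
          _ ≤ s / 3 + s / 3 := by
              refine add_le_add ?_ ?_
              · exact Metric.mem_closedBall.mp hx1
              · rw [dist_comm]
                exact Metric.mem_closedBall.mp hx2
          _ = 2 * (s / 3) := by ring
      have hge : s ≤ dist ((⇑T)^[i2 - i1] z) z := by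
        have h1 : 1 ≤ i2 - i1 := by omega
        have h2 : i2 - i1 ≤ L := by omega
        exact le_trans (hs_le (i2 - i1) (by simp [h1, h2])) (hsf2 (i2 - i1) z h1)
      linarith
    have hsum : ∑ i ∈ Finset.range (L + 1),
        μ {x | (⇑T.symm)^[i] x ∈ Metric.closedBall x₀ (s / 3)} ≤ 1 := by
      rw [← measure_biUnion_finset ?_ ?_]
      · exact prob_le_one
      · intro i1 h1 i2 h2 hne12
        rcases Nat.lt_or_ge i1 i2 with h | h
        · exact hdisj i1 i2 h (by simp at h2; omega)
        · have : i2 < i1 := by omega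
          exact (hdisj i2 i1 this (by simp at h1; omega)).symm
      · intro i _
        exact (mp_symm T μ hmp).iterate i |>.measurable Metric.isClosed_closedBall.measurableSet
    have heach : ∀ i : ℕ, μ {x | (⇑T.symm)^[i] x ∈ Metric.closedBall x₀ (s / 3)}
        = μ (Metric.closedBall x₀ (s / 3)) := by
      intro i
      exact ((mp_symm T μ hmp).iterate i).measure_preimage
        Metric.isClosed_closedBall.measurableSet.nullMeasurableSet
    rw [Finset.sum_congr rfl fun i _ => heach i, Finset.sum_const, Finset.card_range] at hsum
    have hmulle : ((L : ℝ≥0∞) + 1) * μ (Metric.closedBall x₀ (s / 3)) ≤ 1 := by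
      have : ((L + 1 : ℕ) : ℝ≥0∞) = (L : ℝ≥0∞) + 1 := by push_cast; rfl
      rw [← this]
      simpa [nsmul_eq_mul] using hsum
    rw [ENNReal.le_inv_iff_mul_le, mul_comm]
    exact hmulle
  · intro i hi1 hiL x hx hTx
    have hd : dist ((⇑T)^[i] x) x ≤ 2 * (s / 3) := by
      calc dist ((⇑T)^[i] x) x ≤ dist ((⇑T)^[i] x) x₀ + dist x₀ x := dist_triangle _ _ _
        _ ≤ s / 3 + s / 3 := by
            refine add_le_add (Metric.mem_closedBall.mp hTx) ?_
            rw [dist_comm]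
            exact Metric.mem_closedBall.mp hx
        _ = 2 * (s / 3) := by ring
    have hge : s ≤ dist ((⇑T)^[i] x) x :=
      le_trans (hs_le i (by simp [hi1, hiL])) (hsf2 i x hi1)
    linarith

lemma EE_ae (A : Set Ω) (hA : MeasurableSet A)
    (μ : Measure Ω) [IsProbabilityMeasure μ] (herg : Ergodic (⇑T) μ)
    (hApos : 0 < μ A) : μ (EE T A) = 1 := by
  have hEm : MeasurableSet (EE T A) := meas_EE T A hA
  have hsub : EE T A ⊆ (⇑T) ⁻¹' EE T A := fun x hx => EE_apply T A hx
  have heq : μ ((⇑T) ⁻¹' EE T A) = μ (EE T A) :=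
    herg.toMeasurePreserving.measure_preimage hEm.nullMeasurableSet
  have hae : (⇑T) ⁻¹' EE T A =ᵐ[μ] EE T A := by
    exact (ae_eq_of_subset_of_measure_ge hsub (le_of_eq heq) hEm.nullMeasurableSet
      (measure_ne_top μ _)).symm
  rcases herg.quasiErgodic.ae_empty_or_univ₀ hEm.nullMeasurableSet hae with h | h
  · exfalso
    have hAE : A ⊆ EE T A := fun x hx => ⟨0, hx⟩
    have : μ A ≤ μ (EE T A) := measure_mono hAE
    rw [measure_congr h] at this
    simp only [measure_empty] at this
    exact absurd (le_antisymm this zero_le) (ne_of_gt hApos)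
  · rw [measure_congr h, measure_univ]

end DynAux

section USet

variable [MeasurableSpace Ω]

/-- The open set of functions with an exact almost-periodicity witness at scale `k`. -/
def Uset (T : Ω ≃ₜ Ω) (μ : Measure Ω) (k : ℕ) : Set C(Ω, ℝ) :=
  {f | ∃ (g : C(Ω, ℝ)) (c : ℝ) (G : Set Ω), 0 < c ∧ dist f g < c ∧ MeasurableSet G ∧
    μ Gᶜ ≤ (2 : ℝ≥0∞)⁻¹ ^ k ∧
    ∀ ω ∈ G, ∃ q : ℕ, k < q ∧ 2 * c ≤ ((k : ℝ) ^ q)⁻¹ ∧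
      ∀ n : ℤ, 1 ≤ n → n ≤ (q : ℤ) →
        g ((T.toEquiv ^ (n + q)) ω) = g ((T.toEquiv ^ n) ω) ∧
        g ((T.toEquiv ^ (n - q)) ω) = g ((T.toEquiv ^ n) ω)}

lemma isOpen_Uset (T : Ω ≃ₜ Ω) (μ : Measure Ω) (k : ℕ) : IsOpen (Uset T μ k) := by
  rw [Metric.isOpen_iff]
  rintro f ⟨g, c, G, hc, hfg, hGm, hGμ, hprop⟩
  refine ⟨c - dist f g, by linarith, fun f' hf' => ?_⟩
  rw [Metric.mem_ball] at hf'
  refine ⟨g, c, G, hc, ?_, hGm, hGμ, hprop⟩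
  have := dist_triangle f' f g
  linarith

lemma dense_Uset (T : Ω ≃ₜ Ω) [BorelSpace Ω] [Infinite Ω]
    (hmin : ∀ ω : Ω, Dense (Set.range fun n : ℤ => (T.toEquiv ^ n) ω))
    (μ : Measure Ω) [IsProbabilityMeasure μ] (herg : Ergodic (⇑T) μ)
    (hMRP : 0 < μ (PRP (⇑T))) (k : ℕ) (hk : 1 ≤ k) : Dense (Uset T μ k) := by
  classical
  rw [Metric.dense_iff]
  intro f₀ ε hε
  suffices h : ∃ g : C(Ω, ℝ), dist g f₀ < ε ∧ g ∈ Uset T μ k by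
    obtain ⟨g, h1, h2⟩ := h
    exact ⟨g, Metric.mem_ball.mpr h1, h2⟩
  -- parameters
  set m : ℕ := 3 * 2 ^ (k + 3) with hm_def
  have hm4 : 4 ≤ m := by
    have h8 : 8 ≤ 2 ^ (k + 3) := by
      calc 8 = 2 ^ 3 := by norm_num
        _ ≤ 2 ^ (k + 3) := Nat.pow_le_pow_right (by norm_num) (by omega)
    omega
  obtain ⟨δ₀, hδ₀, hδ₀'⟩ := Metric.uniformContinuous_iff.mp
    (CompactSpace.uniformContinuous_of_continuous f₀.continuous) (ε / 2) (by positivity)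
  set δ : ℝ := δ₀ / (m + 1) with hδ_def
  have hδ : 0 < δ := by positivity
  set η : ℝ≥0∞ := (2 : ℝ≥0∞)⁻¹ ^ (k + 3) with hη_def
  have hη0 : η ≠ 0 := by
    rw [hη_def]
    exact pow_ne_zero _ (ENNReal.inv_ne_zero.mpr (by norm_num))
  have hη1 : η ≤ 1 := by
    rw [hη_def]
    exact pow_le_one' (ENNReal.inv_le_one.mpr (by norm_num)) _
  have hηtop : η ≠ ⊤ := by
    rw [hη_def]
    exact ENNReal.pow_ne_top (by simp)
  -- the deep repetition sets
  set D : ℕ → Set Ω := fun q =>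
    {x | ∀ j, j ≤ (m + 2) * q → dist ((⇑T)^[j] x) ((⇑T)^[j + q] x) ≤ δ} with hD_def
  have hDclosed : ∀ q, IsClosed (D q) := by
    intro q
    have he : D q = ⋂ j : ℕ,
        {x | j ≤ (m + 2) * q → dist ((⇑T)^[j] x) ((⇑T)^[j + q] x) ≤ δ} := by
      ext x
      simp only [hD_def, Set.mem_setOf_eq, Set.mem_iInter]
    rw [he]
    refine isClosed_iInter fun j => ?_
    by_cases hj : j ≤ (m + 2) * q
    · have he2 : {x : Ω | j ≤ (m + 2) * q → dist ((⇑T)^[j] x) ((⇑T)^[j + q] x) ≤ δ}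
          = {x : Ω | dist ((⇑T)^[j] x) ((⇑T)^[j + q] x) ≤ δ} := by
        ext x; simp [hj]
      rw [he2]
      exact isClosed_le ((T.continuous.iterate j).dist (T.continuous.iterate (j + q)))
        continuous_const
    · have he2 : {x : Ω | j ≤ (m + 2) * q → dist ((⇑T)^[j] x) ((⇑T)^[j + q] x) ≤ δ}
          = Set.univ := by
        ext x; simp [hj]
      rw [he2]
      exact isClosed_univ
  have hDmeas : ∀ q, MeasurableSet (D q) := fun q => (hDclosed q).measurableSet
  -- covering and cutoff
  have hPRP1 : μ (PRP (⇑T)) = 1 := prp_ae T μ herg hMRP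
  have hcoverPRP : PRP (⇑T) ⊆ ⋃ q : ℕ, ⋃ (_ : k < q), D q := by
    intro ω hω
    obtain ⟨q, hq1, hq2⟩ := prp_window T ω hω δ hδ (m + 2) k
    exact Set.mem_iUnion.mpr ⟨q, Set.mem_iUnion.mpr ⟨hq1, fun j hj => hq2 j hj⟩⟩
  have hmono : Monotone fun Q : ℕ => ⋃ q ∈ Set.Ioc k Q, D q := by
    intro a b hab x hx
    obtain ⟨q, hq1, hq2⟩ := Set.mem_iUnion₂.mp hx
    obtain ⟨ha1, ha2⟩ := Set.mem_Ioc.mp hq1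
    exact Set.mem_iUnion₂.mpr ⟨q, Set.mem_Ioc.mpr ⟨ha1, le_trans ha2 hab⟩, hq2⟩
  have hUeq : (⋃ Q : ℕ, ⋃ q ∈ Set.Ioc k Q, D q) = ⋃ q : ℕ, ⋃ (_ : k < q), D q := by
    ext x
    simp only [Set.mem_iUnion, Set.mem_Ioc]
    constructor
    · rintro ⟨Q, q, ⟨h1, h2⟩, h3⟩
      exact ⟨q, h1, h3⟩
    · rintro ⟨q, h1, h3⟩
      exact ⟨q, q, ⟨h1, le_refl q⟩, h3⟩
  have hsup1 : (⨆ Q : ℕ, μ (⋃ q ∈ Set.Ioc k Q, D q)) = 1 := by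
    rw [← Monotone.measure_iUnion hmono, hUeq]
    refine le_antisymm prob_le_one ?_
    rw [← hPRP1]
    exact measure_mono hcoverPRP
  have hexQ : ∃ Q : ℕ, 1 - η < μ (⋃ q ∈ Set.Ioc k Q, D q) := by
    have hlt : (1 : ℝ≥0∞) - η < ⨆ Q : ℕ, μ (⋃ q ∈ Set.Ioc k Q, D q) := by
      rw [hsup1]
      exact ENNReal.sub_lt_self ENNReal.one_ne_top one_ne_zero hη0
    exact lt_iSup_iff.mp hlt
  obtain ⟨Qb, hQbμ⟩ := hexQ
  set W : Set Ω := ⋃ q ∈ Set.Ioc k Qb, D q with hW_def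
  have hWmeas : MeasurableSet W :=
    MeasurableSet.biUnion (Set.to_countable _) fun q _ => hDmeas q
  have hWc : μ Wᶜ ≤ η := by
    rw [prob_compl_eq_one_sub hWmeas]
    refine tsub_le_iff_right.mpr ?_
    calc (1 : ℝ≥0∞) = (1 - η) + η := (tsub_add_cancel_of_le hη1).symm
      _ ≤ μ W + η := add_le_add_left (le_of_lt hQbμ) η
      _ = η + μ W := add_comm _ _
  -- the certificate function
  set qcf : Ω → ℕ := fun x => sInf {q | q ∈ Set.Ioc k Qb ∧ x ∈ D q} with hqcf_def
  have hqcf_mem : ∀ x, x ∈ W → qcf x ∈ Set.Ioc k Qb ∧ x ∈ D (qcf x) := by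
    intro x hx
    obtain ⟨q, hq1, hq2⟩ := Set.mem_iUnion₂.mp hx
    have heq : qcf x = sInf {q | q ∈ Set.Ioc k Qb ∧ x ∈ D q} := by simp only [hqcf_def]
    have h3 : sInf {q | q ∈ Set.Ioc k Qb ∧ x ∈ D q} ∈ {q | q ∈ Set.Ioc k Qb ∧ x ∈ D q} :=
      Nat.sInf_mem ⟨q, hq1, hq2⟩
    rw [heq]
    exact h3
  have hqcf_pos : ∀ x, x ∈ W → qcf x ≠ 0 := by
    intro x hx h0
    have h1 := (hqcf_mem x hx).1
    rw [h0] at h1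
    exact absurd h1.1 (by omega)
  have hqcf_zero : ∀ x, x ∉ W → qcf x = 0 := by
    intro x hx
    have hemp : {q | q ∈ Set.Ioc k Qb ∧ x ∈ D q} = ∅ := by
      ext q
      simp only [Set.mem_setOf_eq, Set.mem_empty_iff_false, iff_false, not_and]
      intro h1 h2
      exact hx (Set.mem_iUnion₂.mpr ⟨q, h1, h2⟩)
    have : qcf x = sInf {q | q ∈ Set.Ioc k Qb ∧ x ∈ D q} := by simp only [hqcf_def]
    rw [this, hemp]
    exact Nat.sInf_empty
  have hqcf_spec : ∀ x, qcf x ≠ 0 → qcf x ∈ Set.Ioc k Qb ∧ x ∈ D (qcf x) := by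
    intro x hx
    by_cases hW : x ∈ W
    · exact hqcf_mem x hW
    · exact absurd (hqcf_zero x hW) hx
  have hqcf_meas : Measurable qcf := by
    refine measurable_to_countable' fun v => ?_
    by_cases hv : v = 0
    · have he : qcf ⁻¹' {v} = Wᶜ := by
        ext x
        simp only [Set.mem_preimage, Set.mem_singleton_iff, hv, Set.mem_compl_iff]
        constructor
        · intro h0 hW
          exact hqcf_pos x hW h0
        · exact hqcf_zero x
      rw [he]
      exact hWmeas.compl
    · have he : qcf ⁻¹' {v} = ({x : Ω | v ∈ Set.Ioc k Qb} ∩ D v) ∩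
          ⋂ q ∈ Finset.range v, {x : Ω | q ∈ Set.Ioc k Qb → x ∉ D q} := by
        ext x
        simp only [Set.mem_preimage, Set.mem_singleton_iff, Set.mem_inter_iff,
          Set.mem_setOf_eq, Set.mem_iInter, Finset.mem_range]
        constructor
        · intro hqv
          have h1 := hqcf_spec x (by rw [hqv]; exact hv)
          rw [hqv] at h1
          refine ⟨⟨h1.1, h1.2⟩, fun q hq hqIoc hqD => ?_⟩
          have hqmem : q ∈ {q | q ∈ Set.Ioc k Qb ∧ x ∈ D q} := ⟨hqIoc, hqD⟩
          have h5 : qcf x ≤ q := by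
            have : qcf x = sInf {q | q ∈ Set.Ioc k Qb ∧ x ∈ D q} := by simp only [hqcf_def]
            rw [this]
            exact Nat.sInf_le hqmem
          omega
        · rintro ⟨⟨h1, h2⟩, h3⟩
          have hvmem : v ∈ {q | q ∈ Set.Ioc k Qb ∧ x ∈ D q} := ⟨h1, h2⟩
          have hle : qcf x ≤ v := by
            have heq2 : qcf x = sInf {q | q ∈ Set.Ioc k Qb ∧ x ∈ D q} := by
              simp only [hqcf_def]
            rw [heq2]
            exact Nat.sInf_le hvmem
          have hne : {q | q ∈ Set.Ioc k Qb ∧ x ∈ D q}.Nonempty := ⟨v, hvmem⟩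
          have hmem : qcf x ∈ {q | q ∈ Set.Ioc k Qb ∧ x ∈ D q} := by
            have heq2 : qcf x = sInf {q | q ∈ Set.Ioc k Qb ∧ x ∈ D q} := by
              simp only [hqcf_def]
            rw [heq2]
            exact Nat.sInf_mem hne
          rcases Nat.lt_or_ge (qcf x) v with hlt | hge
          · exact absurd hmem.2 (h3 _ hlt hmem.1)
          · omega
      rw [he]
      refine MeasurableSet.inter (MeasurableSet.inter ?_ (hDmeas v)) ?_
      · by_cases hIoc : v ∈ Set.Ioc k Qb
        · simp [hIoc]
        · simp [hIoc]
      · refine MeasurableSet.biInter (Set.to_countable _) fun q _ => ?_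
        by_cases hIoc : q ∈ Set.Ioc k Qb
        · have : {x : Ω | q ∈ Set.Ioc k Qb → x ∉ D q} = (D q)ᶜ := by
            ext x; simp [hIoc]
          rw [this]
          exact (hDmeas q).compl
        · have : {x : Ω | q ∈ Set.Ioc k Qb → x ∉ D q} = Set.univ := by
            ext x; simp [hIoc]
          rw [this]
          exact MeasurableSet.univ
  -- the marker set
  set L : ℕ := m * Qb * 2 ^ (k + 3) + 1 with hL_def
  obtain ⟨A, hA_meas, hA_pos, hA_small, hA_sep⟩ :=
    exists_marker T hmin μ herg.toMeasurePreserving L (by omega)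
  -- Qb is nontrivial
  have hηlt1 : η < 1 := by
    rw [hη_def]
    refine pow_lt_one₀ zero_le ?_ (by omega)
    rw [ENNReal.inv_lt_one]
    norm_num
  have hQbk : k < Qb := by
    by_contra hno
    have hemp : Set.Ioc k Qb = ∅ := by
      ext q
      simp only [Set.mem_Ioc, Set.mem_empty_iff_false, iff_false, not_and, not_le]
      intro h1
      omega
    have hW0 : μ W = 0 := by
      rw [hW_def, hemp]
      simp
    rw [hW0] at hQbμ
    have : (0 : ℝ≥0∞) < 1 - η := tsub_pos_iff_lt.mpr hηlt1
    exact absurd hQbμ (by simp [this, not_lt, le_of_lt this])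
  -- tower facts
  have hmp := herg.toMeasurePreserving
  have hEfull : μ (EE T A) = 1 := EE_ae T A hA_meas μ herg hA_pos
  have hScount : ∀ q l, l < m * q → μ (SqB T A qcf m q l) = μ (SqB T A qcf m q 0) :=
    fun q l hl => SqB_measure_const T A qcf m hA_meas hqcf_meas μ hmp l hl
  -- CertB failure bound
  have hcert_bound : μ {x | ¬ CertB T A qcf m x} ≤ η + η := by
    have hsub : {x | ¬ CertB T A qcf m x} ⊆
        Wᶜ ∪ ⋃ i ∈ Finset.Ico 1 (m * Qb), ((⇑T)^[i]) ⁻¹' A := by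
      intro x hx
      simp only [CertB, Set.mem_setOf_eq, not_and, not_forall] at hx
      by_cases hW : x ∈ W
      · right
        have hq0 := hqcf_pos x hW
        obtain ⟨i, hi1, hi2, hi3⟩ := hx hq0
        have hiA : (⇑T)^[i] x ∈ A := by
          by_contra hno
          exact hi3 hno
        have hqle : qcf x ≤ Qb := (hqcf_spec x hq0).1.2
        refine Set.mem_iUnion₂.mpr ⟨i, Finset.mem_Ico.mpr ⟨hi1, ?_⟩, hiA⟩
        calc i < m * qcf x := hi2
          _ ≤ m * Qb := Nat.mul_le_mul_left m hqle
      · left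
        exact hW
    refine le_trans (measure_mono hsub) (le_trans (measure_union_le _ _) ?_)
    refine add_le_add hWc ?_
    have hstep1 : μ (⋃ i ∈ Finset.Ico 1 (m * Qb), ((⇑T)^[i]) ⁻¹' A)
        ≤ ((m * Qb : ℕ) : ℝ≥0∞) * μ A := by
      refine le_trans (measure_biUnion_finset_le _ _) ?_
      have he : ∀ i ∈ Finset.Ico 1 (m * Qb), μ (((⇑T)^[i]) ⁻¹' A) = μ A := fun i _ =>
        (hmp.iterate i).measure_preimage hA_meas.nullMeasurableSet
      rw [Finset.sum_congr rfl he, Finset.sum_const, nsmul_eq_mul]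
      refine mul_le_mul_left ?_ _
      have : (Finset.Ico 1 (m * Qb)).card ≤ m * Qb := by
        rw [Nat.card_Ico]
        omega
      exact_mod_cast this
    refine le_trans hstep1 ?_
    refine le_trans (mul_le_mul_right hA_small _) ?_
    -- (m*Qb) * (L+1)⁻¹ ≤ η
    have ha0 : ((m * Qb : ℕ) : ℝ≥0∞) ≠ 0 :=
      Nat.cast_ne_zero.mpr (Nat.mul_ne_zero (by omega) (by omega))
    have hatop : ((m * Qb : ℕ) : ℝ≥0∞) ≠ ⊤ := ENNReal.natCast_ne_top _
    have hmono2 : ((L : ℝ≥0∞) + 1)⁻¹ ≤ (((m * Qb : ℕ) : ℝ≥0∞) * 2 ^ (k + 3))⁻¹ := by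
      rw [ENNReal.inv_le_inv]
      have hLcast : ((m * Qb * 2 ^ (k + 3) : ℕ) : ℝ≥0∞) ≤ (L : ℝ≥0∞) + 1 := by
        have h1 : (m * Qb * 2 ^ (k + 3) : ℕ) ≤ L := by
          rw [hL_def]
          omega
        calc ((m * Qb * 2 ^ (k + 3) : ℕ) : ℝ≥0∞) ≤ (L : ℝ≥0∞) := by exact_mod_cast h1
          _ ≤ (L : ℝ≥0∞) + 1 := le_self_add
      calc ((m * Qb : ℕ) : ℝ≥0∞) * 2 ^ (k + 3)
          = ((m * Qb * 2 ^ (k + 3) : ℕ) : ℝ≥0∞) := by push_cast; ring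
        _ ≤ (L : ℝ≥0∞) + 1 := hLcast
    refine le_trans (mul_le_mul_right hmono2 _) ?_
    rw [ENNReal.mul_inv (Or.inl ha0) (Or.inl hatop), ← mul_assoc,
      ENNReal.mul_inv_cancel ha0 hatop, one_mul, hη_def, ENNReal.inv_pow]
  -- closed kernels of the tower levels
  set ι : ℝ≥0∞ := η / ((m * Qb * Qb : ℕ) + 1) with hι_def
  have hι0 : ι ≠ 0 := by
    rw [hι_def, ne_eq, ENNReal.div_eq_zero_iff]
    push_neg
    exact ⟨hη0, ENNReal.add_ne_top.mpr ⟨ENNReal.natCast_ne_top _, ENNReal.one_ne_top⟩⟩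
  have hK : ∀ q : ℕ, ∃ K : Set Ω, K ⊆ SqB T A qcf m q 0 ∧ IsClosed K ∧
      μ (SqB T A qcf m q 0 \ K) < ι :=
    fun q => (meas_SqB T A qcf m hA_meas hqcf_meas q 0).exists_isClosed_diff_lt
      (measure_ne_top μ _) hι0
  choose Kf hK1 hK2 hK3 using hK
  set piece : ℕ → ℕ → Set Ω := fun q l => ((⇑T.symm)^[l]) ⁻¹' (Kf q) with hpiece_def
  have hpiece_closed : ∀ q l, IsClosed (piece q l) :=
    fun q l => (hK2 q).preimage ((T.symm.continuous).iterate l)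
  have hpiece_sub : ∀ q l, l < m * q → piece q l ⊆ SqB T A qcf m q l := by
    intro q l hl x hx
    have hb : (⇑T.symm)^[l] x ∈ SqB T A qcf m q 0 := hK1 q hx
    have h2 := SqB_iter_mem T A qcf m hb l hl
    rwa [iter_symm_cancel] at h2
  have hpiece_loss : ∀ q l, μ (SqB T A qcf m q l \ piece q l) ≤ ι := by
    intro q l
    have hsub : SqB T A qcf m q l \ piece q l ⊆
        ((⇑T.symm)^[l]) ⁻¹' (SqB T A qcf m q 0 \ Kf q) := by
      rintro x ⟨hx1, hx2⟩
      exact ⟨(SqB_subset_iter_base T A qcf m hx1).1, hx2⟩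
    refine le_trans (measure_mono hsub) ?_
    rw [((mp_symm T μ hmp).iterate l).measure_preimage
      (((meas_SqB T A qcf m hA_meas hqcf_meas q 0).diff
        (hK2 q).measurableSet).nullMeasurableSet)]
    exact le_of_lt (hK3 q)
  -- chaining estimate on the deep sets
  have chainD : ∀ q, 0 < q → ∀ b ∈ D q, ∀ s i : ℕ, s + i * q ≤ (m + 2) * q →
      dist ((⇑T)^[s] b) ((⇑T)^[s + i * q] b) ≤ i * δ := by
    intro q hq b hb s i
    have hb' : ∀ j, j ≤ (m + 2) * q → dist ((⇑T)^[j] b) ((⇑T)^[j + q] b) ≤ δ := hb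
    induction i with
    | zero => intro _; simp
    | succ i ih =>
      intro hle
      have hmul : (i + 1) * q = i * q + q := by ring
      have h1 : s + i * q ≤ (m + 2) * q := by omega
      have h2 := ih h1
      have h3 := hb' (s + i * q) h1
      have he : s + i * q + q = s + (i + 1) * q := by ring
      rw [he] at h3
      calc dist ((⇑T)^[s] b) ((⇑T)^[s + (i + 1) * q] b)
          ≤ dist ((⇑T)^[s] b) ((⇑T)^[s + i * q] b)
            + dist ((⇑T)^[s + i * q] b) ((⇑T)^[s + (i + 1) * q] b) := dist_triangle _ _ _
        _ ≤ i * δ + δ := add_le_add h2 h3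
        _ = ((i + 1 : ℕ) : ℝ) * δ := by push_cast; ring
  -- the snapped value functions
  set v : ℕ → ℕ → Ω → ℝ := fun q l x => f₀ ((⇑T)^[l % q] ((⇑T.symm)^[l] x)) with hv_def
  have hv_cont : ∀ q l, Continuous (v q l) := fun q l =>
    f₀.continuous.comp ((T.continuous.iterate _).comp ((T.symm.continuous).iterate _))
  have hv_close : ∀ q l, q ∈ Set.Ioc k Qb → l < m * q → ∀ x ∈ piece q l,
      |v q l x - f₀ x| < ε / 2 := by
    intro q l hq hl x hx
    set b := (⇑T.symm)^[l] x with hb_def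
    have hbK : b ∈ SqB T A qcf m q 0 := hK1 q hx
    obtain ⟨hbs, hbc, hbq⟩ := SqB_base T A qcf m hbK
    have hq0 : 0 < q := by
      have := hq.1
      omega
    have hbD : b ∈ D q := by
      have h2 := (hqcf_spec b (by rw [hbq]; omega)).2
      rwa [hbq] at h2
    have hxb : x = (⇑T)^[l] b := (iter_symm_cancel T l x).symm
    have hdm : l % q + l / q * q = l := Nat.mod_add_div' l q
    have hidx : l % q + l / q * q ≤ (m + 2) * q := by
      rw [hdm]
      calc l ≤ m * q := le_of_lt hl
        _ ≤ (m + 2) * q := Nat.mul_le_mul_right q (by omega)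
    have hchain := chainD q hq0 b hbD (l % q) (l / q) hidx
    rw [hdm] at hchain
    have hlq : l / q ≤ m := le_of_lt ((Nat.div_lt_iff_lt_mul hq0).mpr hl)
    have hdist : dist ((⇑T)^[l % q] b) ((⇑T)^[l] b) < δ₀ := by
      refine lt_of_le_of_lt hchain ?_
      calc ((l / q : ℕ) : ℝ) * δ ≤ (m : ℝ) * δ := by
            refine mul_le_mul_of_nonneg_right ?_ (le_of_lt hδ)
            exact_mod_cast hlq
        _ = (m : ℝ) * δ₀ / ((m : ℝ) + 1) := by rw [hδ_def]; ring
        _ < δ₀ := by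
            rw [div_lt_iff₀ (by positivity)]
            nlinarith [hδ₀]
    have hf := hδ₀' hdist
    rw [Real.dist_eq] at hf
    show |f₀ ((⇑T)^[l % q] ((⇑T.symm)^[l] x)) - f₀ x| < ε / 2
    rw [← hb_def]
    conv_lhs => rw [hxb]
    exact hf
  -- the index set and the glued function
  set P : Finset (ℕ × ℕ) :=
    (Finset.Ioc k Qb ×ˢ Finset.range (m * Qb)).filter (fun p => p.2 < m * p.1) with hP_def
  have hP_mem : ∀ p : ℕ × ℕ, p ∈ P ↔ (p.1 ∈ Set.Ioc k Qb ∧ p.2 < m * p.1) := by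
    intro p
    rw [hP_def, Finset.mem_filter, Finset.mem_product, Finset.mem_range]
    constructor
    · rintro ⟨⟨h1, _⟩, h3⟩
      exact ⟨Finset.mem_Ioc.mp h1, h3⟩
    · rintro ⟨h1, h3⟩
      refine ⟨⟨Finset.mem_Ioc.mpr h1, lt_of_lt_of_le h3 ?_⟩, h3⟩
      exact Nat.mul_le_mul_left m h1.2
  set Z : Set Ω := ⋃ p ∈ (P : Set (ℕ × ℕ)), piece p.1 p.2 with hZ_def
  have hZclosed : IsClosed Z := by
    rw [hZ_def]
    exact Set.Finite.isClosed_biUnion (Finset.finite_toSet P)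
      (fun p _ => hpiece_closed p.1 p.2)
  have hpiece_disj : ∀ p ∈ P, ∀ p' ∈ P, p ≠ p' → ∀ x, x ∈ piece p.1 p.2 →
      x ∉ piece p'.1 p'.2 := by
    intro p hp p' hp' hne x hx hx'
    have h1 := hpiece_sub p.1 p.2 ((hP_mem p).mp hp).2 hx
    have h2 := hpiece_sub p'.1 p'.2 ((hP_mem p').mp hp').2 hx'
    obtain ⟨_, _, hq1, hl1⟩ := h1
    obtain ⟨_, _, hq2, hl2⟩ := h2
    exact hne (Prod.ext (by rw [← hq1, ← hq2]) (by rw [← hl1, ← hl2]))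
  set vg : Ω → ℝ := fun x => ∑ p ∈ P, (piece p.1 p.2).indicator (v p.1 p.2) x with hvg_def
  have hvg_eq : ∀ p ∈ P, ∀ x ∈ piece p.1 p.2, vg x = v p.1 p.2 x := by
    intro p hp x hx
    show (∑ p ∈ P, (piece p.1 p.2).indicator (v p.1 p.2) x) = v p.1 p.2 x
    rw [Finset.sum_eq_single p]
    · rw [Set.indicator_of_mem hx]
    · intro p' hp' hne
      exact Set.indicator_of_notMem (hpiece_disj p hp p' hp' (Ne.symm hne) x hx) _
    · intro habs
      exact absurd hp habs
  have hvg_cont : ContinuousOn vg Z := by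
    intro x hxZ
    obtain ⟨p₀, hp₀P, hxp₀⟩ := Set.mem_iUnion₂.mp hxZ
    set U : Set Ω := ⋂ p ∈ P.erase p₀, (piece p.1 p.2)ᶜ with hU_def
    have hUopen : IsOpen U := by
      rw [hU_def]
      exact isOpen_biInter_finset fun p _ => (hpiece_closed p.1 p.2).isOpen_compl
    have hxU : x ∈ U := by
      rw [hU_def]
      refine Set.mem_iInter₂.mpr fun p hp => ?_
      exact hpiece_disj p₀ hp₀P p (Finset.mem_of_mem_erase hp)
        (Ne.symm (Finset.ne_of_mem_erase hp)) x hxp₀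
    have hcongr : ∀ y ∈ Z ∩ U, vg y = v p₀.1 p₀.2 y := by
      rintro y ⟨hyZ, hyU⟩
      obtain ⟨p₁, hp₁P, hyp₁⟩ := Set.mem_iUnion₂.mp hyZ
      have hp₁eq : p₁ = p₀ := by
        by_contra hne
        exact (Set.mem_iInter₂.mp hyU p₁ (Finset.mem_erase.mpr ⟨hne, hp₁P⟩)) hyp₁
      rw [hp₁eq] at hyp₁
      exact hvg_eq p₀ hp₀P y hyp₁
    have h1 : ContinuousWithinAt (v p₀.1 p₀.2) (Z ∩ U) x :=
      (hv_cont p₀.1 p₀.2).continuousWithinAt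
    have h2 : ContinuousWithinAt vg (Z ∩ U) x := by
      refine h1.congr hcongr (hcongr x ⟨hxZ, hxU⟩)
    exact (continuousWithinAt_inter (hUopen.mem_nhds hxU)).mp h2
  have hZbound : ∀ x ∈ Z, |vg x - f₀ x| ≤ ε / 2 := by
    intro x hx
    obtain ⟨p, hpP, hxp⟩ := Set.mem_iUnion₂.mp hx
    rw [hvg_eq p hpP x hxp]
    exact le_of_lt (hv_close p.1 p.2 ((hP_mem p).mp hpP).1 ((hP_mem p).mp hpP).2 x hxp)
  -- Tietze extension
  have hZcompact : IsCompact Z := hZclosed.isCompact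
  haveI : CompactSpace Z := isCompact_iff_compactSpace.mp hZcompact
  set w : C(Z, ℝ) := ⟨Z.restrict (fun x => vg x - f₀ x),
    ContinuousOn.restrict (hvg_cont.sub f₀.continuous.continuousOn)⟩ with hw_def
  obtain ⟨φ, hφnorm, hφres⟩ :=
    BoundedContinuousFunction.exists_norm_eq_restrict_eq_of_closed
      (BoundedContinuousFunction.mkOfCompact w) hZclosed
  have hφ_on_Z : ∀ x : Ω, ∀ hx : x ∈ Z, φ x = vg x - f₀ x := by
    intro x hx
    have h1 : (φ.domRestrict Z) ⟨x, hx⟩ = (BoundedContinuousFunction.mkOfCompact w) ⟨x, hx⟩ := by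
      rw [hφres]
    exact h1
  have hφ_bound : ∀ x : Ω, |φ x| ≤ ε / 2 := by
    intro x
    have h1 : ‖φ x‖ ≤ ‖φ‖ := BoundedContinuousFunction.norm_coe_le_norm φ x
    rw [hφnorm] at h1
    have h2 : ‖BoundedContinuousFunction.mkOfCompact w‖ ≤ ε / 2 := by
      refine (BoundedContinuousFunction.norm_le (by positivity)).mpr fun z => ?_
      have h3 : (BoundedContinuousFunction.mkOfCompact w) z = vg (z : Ω) - f₀ (z : Ω) := by
        rfl
      rw [h3, Real.norm_eq_abs]
      exact hZbound (z : Ω) z.2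
    rw [Real.norm_eq_abs] at h1
    exact le_trans h1 h2
  set g : C(Ω, ℝ) := f₀ + φ.toContinuousMap with hg_def
  have hg_sub : ∀ x : Ω, g x = f₀ x + φ x := by
    intro x
    rw [hg_def]
    rfl
  have hg_dist : dist g f₀ < ε := by
    rw [ContinuousMap.dist_lt_iff hε]
    intro x
    rw [Real.dist_eq, hg_sub x]
    have := hφ_bound x
    have h2 : |f₀ x + φ x - f₀ x| = |φ x| := by ring_nf
    rw [h2]
    linarith
  have hg_on_piece : ∀ p ∈ P, ∀ x ∈ piece p.1 p.2, g x = v p.1 p.2 x := by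
    intro p hp x hx
    have hxZ : x ∈ Z := Set.mem_iUnion₂.mpr ⟨p, hp, hx⟩
    rw [hg_sub x, hφ_on_Z x hxZ, hvg_eq p hp x hx]
    ring
  -- the good set
  set PG : Finset (ℕ × ℕ) := P.filter (fun p => p.1 ≤ p.2 ∧ p.2 + 2 * p.1 < m * p.1)
    with hPG_def
  set G : Set Ω := ⋃ p ∈ PG, piece p.1 p.2 with hG_def
  have hGmeas : MeasurableSet G := by
    rw [hG_def]
    exact Finset.measurableSet_biUnion PG fun p _ => (hpiece_closed p.1 p.2).measurableSet
  -- decomposition of the complement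
  set EdgeSet : Set Ω := ⋃ q ∈ Finset.Ioc k Qb,
    ⋃ l ∈ (Finset.range (m * q)).filter
      (fun l => ¬(q ≤ l ∧ l + 2 * q < m * q)), SqB T A qcf m q l with hEdge_def
  set LossSet : Set Ω := ⋃ p ∈ PG,
    (SqB T A qcf m p.1 p.2 \ piece p.1 p.2) with hLoss_def
  have hGc_sub : Gᶜ ⊆ ((EE T A)ᶜ ∪ {x | ¬ CertB T A qcf m x}) ∪ (EdgeSet ∪ LossSet) := by
    intro x hxG
    by_cases hE : x ∈ EE T A
    swap
    · exact Or.inl (Or.inl hE)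
    by_cases hc : CertB T A qcf m (bsB T A qcf m x)
    swap
    · exact Or.inl (Or.inr (cover_junk T A qcf m hc))
    have hq0ne : qcf (bsB T A qcf m x) ≠ 0 := hc.1
    have hxS : x ∈ SqB T A qcf m (qcf (bsB T A qcf m x)) (offB T A qcf m x) :=
      cover_cert T A qcf m hE hc
    set q₀ := qcf (bsB T A qcf m x) with hq₀_def
    set l₀ := offB T A qcf m x with hl₀_def
    have hq₀Ioc : q₀ ∈ Set.Ioc k Qb := (hqcf_spec _ hq0ne).1
    have hmq₀ : 1 ≤ m * q₀ := by
      have h1 : 1 ≤ q₀ := by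
        have := hq₀Ioc.1
        omega
      have := Nat.mul_le_mul (show 1 ≤ m by omega) h1
      omega
    have hl₀lt : l₀ < m * q₀ := by
      have h1 := offB_lt_stp T A qcf m x
      have h2 : stp T A qcf m (bsB T A qcf m x) = m * qcf (bsB T A qcf m x) :=
        stp_of_cert T A qcf m hc (by rw [← hq₀_def]; exact hmq₀)
      rw [h2] at h1
      exact h1
    have hpP : (q₀, l₀) ∈ P := (hP_mem _).mpr ⟨hq₀Ioc, hl₀lt⟩
    by_cases hgood : q₀ ≤ l₀ ∧ l₀ + 2 * q₀ < m * q₀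
    · right
      right
      have hpPG : (q₀, l₀) ∈ PG := Finset.mem_filter.mpr ⟨hpP, hgood⟩
      refine Set.mem_iUnion₂.mpr ⟨(q₀, l₀), hpPG, hxS, fun hxpiece => ?_⟩
      exact hxG (Set.mem_iUnion₂.mpr ⟨(q₀, l₀), hpPG, hxpiece⟩)
    · right
      left
      refine Set.mem_iUnion₂.mpr ⟨q₀, Finset.mem_Ioc.mpr hq₀Ioc, ?_⟩
      refine Set.mem_iUnion₂.mpr ⟨l₀, ?_, hxS⟩
      exact Finset.mem_filter.mpr ⟨Finset.mem_range.mpr hl₀lt, hgood⟩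
  -- full mass bound
  have hfullsum : ∑ q ∈ Finset.Ioc k Qb, ((m * q : ℕ) : ℝ≥0∞) * μ (SqB T A qcf m q 0) ≤ 1 := by
    have hinner : ∀ q ∈ Finset.Ioc k Qb,
        μ (⋃ l ∈ Finset.range (m * q), SqB T A qcf m q l)
          = ((m * q : ℕ) : ℝ≥0∞) * μ (SqB T A qcf m q 0) := by
      intro q hq
      rw [measure_biUnion_finset]
      · rw [Finset.sum_congr rfl (fun l hl => hScount q l (Finset.mem_range.mp hl)),
          Finset.sum_const, Finset.card_range, nsmul_eq_mul]
      · intro l1 h1 l2 h2 hne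
        exact SqB_disjoint T A qcf m (fun hh => hne hh.2)
      · intro l _
        exact meas_SqB T A qcf m hA_meas hqcf_meas q l
    have houter : μ (⋃ q ∈ Finset.Ioc k Qb,
        ⋃ l ∈ Finset.range (m * q), SqB T A qcf m q l)
        = ∑ q ∈ Finset.Ioc k Qb, ((m * q : ℕ) : ℝ≥0∞) * μ (SqB T A qcf m q 0) := by
      rw [measure_biUnion_finset]
      · exact Finset.sum_congr rfl hinner
      · intro q1 h1 q2 h2 hne
        simp only [Function.onFun]
        rw [Set.disjoint_left]
        intro x hx1 hx2
        obtain ⟨l1, _, hm1⟩ := Set.mem_iUnion₂.mp hx1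
        obtain ⟨l2, _, hm2⟩ := Set.mem_iUnion₂.mp hx2
        exact (Set.disjoint_left.mp (SqB_disjoint T A qcf m
          (fun hh => hne hh.1)) hm1) hm2
      · intro q _
        exact Finset.measurableSet_biUnion _
          fun l _ => meas_SqB T A qcf m hA_meas hqcf_meas q l
    rw [← houter]
    exact prob_le_one
  -- edge bound
  have hedge : μ EdgeSet ≤ η := by
    have hstep : μ EdgeSet ≤ ∑ q ∈ Finset.Ioc k Qb,
        ((3 * q : ℕ) : ℝ≥0∞) * μ (SqB T A qcf m q 0) := by
      rw [hEdge_def]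
      refine le_trans (measure_biUnion_finset_le _ _) ?_
      refine Finset.sum_le_sum fun q hq => ?_
      refine le_trans (measure_biUnion_finset_le _ _) ?_
      have hcongr2 : ∀ l ∈ (Finset.range (m * q)).filter
          (fun l => ¬(q ≤ l ∧ l + 2 * q < m * q)), μ (SqB T A qcf m q l)
            = μ (SqB T A qcf m q 0) := by
        intro l hl
        exact hScount q l (Finset.mem_range.mp (Finset.mem_filter.mp hl).1)
      rw [Finset.sum_congr rfl hcongr2, Finset.sum_const, nsmul_eq_mul]
      refine mul_le_mul_left ?_ _
      have hcard : ((Finset.range (m * q)).filter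
          (fun l => ¬(q ≤ l ∧ l + 2 * q < m * q))).card ≤ 3 * q := by
        have hsub2 : (Finset.range (m * q)).filter
            (fun l => ¬(q ≤ l ∧ l + 2 * q < m * q)) ⊆
            Finset.range q ∪ Finset.Ico (m * q - 2 * q) (m * q) := by
          intro l hl
          obtain ⟨hl1, hl2⟩ := Finset.mem_filter.mp hl
          rw [Finset.mem_range] at hl1
          rw [Finset.mem_union, Finset.mem_range, Finset.mem_Ico]
          by_cases hlq : l < q
          · exact Or.inl hlq
          · right
            push_neg at hl2
            have := hl2 (by omega)
            omega
        refine le_trans (Finset.card_le_card hsub2) ?_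
        refine le_trans (Finset.card_union_le _ _) ?_
        rw [Finset.card_range, Nat.card_Ico]
        have h2q : 2 * q ≤ m * q := Nat.mul_le_mul_right q (by omega)
        omega
      exact_mod_cast hcard
    refine le_trans hstep ?_
    -- ∑ 3q μ ≤ η using m ∑ 3q μ = 3 ∑ mq μ ≤ 3
    have hkey : (m : ℝ≥0∞) * ∑ q ∈ Finset.Ioc k Qb,
        ((3 * q : ℕ) : ℝ≥0∞) * μ (SqB T A qcf m q 0) ≤ 3 := by
      rw [Finset.mul_sum]
      have he : ∀ q ∈ Finset.Ioc k Qb,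
          (m : ℝ≥0∞) * (((3 * q : ℕ) : ℝ≥0∞) * μ (SqB T A qcf m q 0))
          = 3 * (((m * q : ℕ) : ℝ≥0∞) * μ (SqB T A qcf m q 0)) := by
        intro q _
        push_cast
        ring
      rw [Finset.sum_congr rfl he, ← Finset.mul_sum]
      calc (3 : ℝ≥0∞) * ∑ q ∈ Finset.Ioc k Qb,
          ((m * q : ℕ) : ℝ≥0∞) * μ (SqB T A qcf m q 0) ≤ 3 * 1 :=
            mul_le_mul_right hfullsum 3
        _ = 3 := mul_one 3
    have hm_eq : (m : ℝ≥0∞) = 3 * 2 ^ (k + 3) := by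
      rw [hm_def]
      push_cast
      ring
    rw [hm_eq, mul_assoc] at hkey
    have h3ne0 : (3 : ℝ≥0∞) ≠ 0 := by norm_num
    have h3netop : (3 : ℝ≥0∞) ≠ ⊤ := by norm_num
    have hkey2 : (2 : ℝ≥0∞) ^ (k + 3) * ∑ q ∈ Finset.Ioc k Qb,
        ((3 * q : ℕ) : ℝ≥0∞) * μ (SqB T A qcf m q 0) ≤ 1 := by
      refine (ENNReal.mul_le_mul_iff_right h3ne0 h3netop).mp ?_
      rw [mul_one]
      exact hkey
    rw [hη_def, ← ENNReal.inv_pow, ENNReal.le_inv_iff_mul_le, mul_comm]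
    exact hkey2
  -- loss bound
  have hloss : μ LossSet ≤ η := by
    rw [hLoss_def]
    refine le_trans (measure_biUnion_finset_le _ _) ?_
    have he : ∀ p ∈ PG, μ (SqB T A qcf m p.1 p.2 \ piece p.1 p.2) ≤ ι :=
      fun p _ => hpiece_loss p.1 p.2
    refine le_trans (Finset.sum_le_sum he) ?_
    rw [Finset.sum_const, nsmul_eq_mul]
    have hcard : (PG.card : ℝ≥0∞) ≤ ((m * Qb * Qb : ℕ) : ℝ≥0∞) + 1 := by
      have h1 : PG.card ≤ (Finset.Ioc k Qb ×ˢ Finset.range (m * Qb)).card := by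
        refine Finset.card_le_card ?_
        intro p hp
        exact Finset.mem_of_mem_filter p (Finset.mem_of_mem_filter p hp)
      rw [Finset.card_product, Nat.card_Ioc, Finset.card_range] at h1
      have h2 : (Qb - k) * (m * Qb) ≤ m * Qb * Qb := by
        have h3 : Qb - k ≤ Qb := by omega
        calc (Qb - k) * (m * Qb) ≤ Qb * (m * Qb) := Nat.mul_le_mul_right _ h3
          _ = m * Qb * Qb := by ring
      have h4 : PG.card ≤ m * Qb * Qb := le_trans h1 h2
      calc (PG.card : ℝ≥0∞) ≤ ((m * Qb * Qb : ℕ) : ℝ≥0∞) := by exact_mod_cast h4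
        _ ≤ ((m * Qb * Qb : ℕ) : ℝ≥0∞) + 1 := le_self_add
    refine le_trans (mul_le_mul_left hcard _) ?_
    rw [hι_def]
    exact ENNReal.mul_div_le
  -- total measure bound
  have hGc : μ Gᶜ ≤ (2 : ℝ≥0∞)⁻¹ ^ k := by
    have hEEc : μ (EE T A)ᶜ = 0 := by
      rw [prob_compl_eq_one_sub (meas_EE T A hA_meas), hEfull, tsub_self]
    have h4η : η + η + (η + η) ≤ (2 : ℝ≥0∞)⁻¹ ^ k := by
      have hsum4 : η + η + (η + η) = 4 * η := by ring
      rw [hsum4, hη_def, pow_add]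
      calc (4 : ℝ≥0∞) * ((2 : ℝ≥0∞)⁻¹ ^ k * (2 : ℝ≥0∞)⁻¹ ^ 3)
          = (2 : ℝ≥0∞)⁻¹ ^ k * ((4 : ℝ≥0∞) * (2 : ℝ≥0∞)⁻¹ ^ 3) := by ring
        _ ≤ (2 : ℝ≥0∞)⁻¹ ^ k * 1 := by
            refine mul_le_mul_right ?_ _
            have h8 : ((2 : ℝ≥0∞)⁻¹) ^ 3 = ((2 : ℝ≥0∞) ^ 3)⁻¹ := ENNReal.inv_pow.symm
            rw [h8, show ((2 : ℝ≥0∞)) ^ 3 = 8 by norm_num]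
            calc (4 : ℝ≥0∞) * (8 : ℝ≥0∞)⁻¹ ≤ (8 : ℝ≥0∞) * (8 : ℝ≥0∞)⁻¹ :=
                mul_le_mul_left (by norm_num) _
              _ = 1 := ENNReal.mul_inv_cancel (by norm_num) (by norm_num)
        _ = (2 : ℝ≥0∞)⁻¹ ^ k := mul_one _
    calc μ Gᶜ ≤ μ (((EE T A)ᶜ ∪ {x | ¬ CertB T A qcf m x}) ∪ (EdgeSet ∪ LossSet)) :=
        measure_mono hGc_sub
      _ ≤ (μ (EE T A)ᶜ + μ {x | ¬ CertB T A qcf m x}) + (μ EdgeSet + μ LossSet) := by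
          refine le_trans (measure_union_le _ _) ?_
          exact add_le_add (measure_union_le _ _) (measure_union_le _ _)
      _ ≤ (0 + (η + η)) + (η + η) := by
          refine add_le_add (add_le_add (le_of_eq hEEc) hcert_bound)
            (add_le_add hedge hloss)
      _ = η + η + (η + η) := by rw [zero_add]
      _ ≤ (2 : ℝ≥0∞)⁻¹ ^ k := h4η
  -- conclusion: g with its witness data
  refine ⟨g, hg_dist, g, ((k : ℝ) ^ Qb)⁻¹ / 2, G, ?_, ?_, hGmeas, hGc, ?_⟩
  · have hkpos : (0 : ℝ) < (k : ℝ) ^ Qb := by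
      have : (0 : ℝ) < (k : ℝ) := by exact_mod_cast hk
      positivity
    positivity
  · rw [dist_self]
    have hkpos : (0 : ℝ) < (k : ℝ) ^ Qb := by
      have : (0 : ℝ) < (k : ℝ) := by exact_mod_cast hk
      positivity
    positivity
  · intro ω hω
    obtain ⟨p, hpPG, hωp⟩ := Set.mem_iUnion₂.mp hω
    obtain ⟨hpP, hgood⟩ := Finset.mem_filter.mp hpPG
    obtain ⟨hq_Ioc, hl_lt⟩ := (hP_mem p).mp hpP
    set q := p.1 with hq_def2
    set l := p.2 with hl_def2
    refine ⟨q, hq_Ioc.1, ?_, ?_⟩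
    · -- margin
      have hk1 : (1 : ℝ) ≤ (k : ℝ) := by exact_mod_cast hk
      have hmono3 : (k : ℝ) ^ q ≤ (k : ℝ) ^ Qb := pow_le_pow_right₀ hk1 hq_Ioc.2
      have hpos1 : (0 : ℝ) < (k : ℝ) ^ q := by positivity
      have h2 : ((k : ℝ) ^ Qb)⁻¹ ≤ ((k : ℝ) ^ q)⁻¹ := by
        apply inv_anti₀ hpos1 hmono3
      calc 2 * (((k : ℝ) ^ Qb)⁻¹ / 2) = ((k : ℝ) ^ Qb)⁻¹ := by ring
        _ ≤ ((k : ℝ) ^ q)⁻¹ := h2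
    · intro n hn1 hn2
      set b := (⇑T.symm)^[l] ω with hb_def2
      have hbK : b ∈ Kf q := hωp
      have hωb : ω = (⇑T)^[l] b := (iter_symm_cancel T l ω).symm
      set n' := n.toNat with hn'_def
      have hn'1 : 1 ≤ n' := by omega
      have hn'q : n' ≤ q := by omega
      have hn'cast : (n' : ℤ) = n := Int.toNat_of_nonneg (by omega)
      have hql : q ≤ l := hgood.1
      have hl2q : l + 2 * q < m * q := hgood.2
      have hmem_piece : ∀ w : ℕ, w < m * q → (⇑T)^[w] b ∈ piece q w := by
        intro w _
        show (⇑T.symm)^[w] ((⇑T)^[w] b) ∈ Kf q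
        rw [symm_iter_cancel]
        exact hbK
      have hgval : ∀ w : ℕ, w < m * q → g ((⇑T)^[w] b) = f₀ ((⇑T)^[w % q] b) := by
        intro w hw
        have hpw : ((q, w) : ℕ × ℕ) ∈ P := (hP_mem (q, w)).mpr ⟨hq_Ioc, hw⟩
        have := hg_on_piece (q, w) hpw ((⇑T)^[w] b) (hmem_piece w hw)
        rw [this]
        show f₀ ((⇑T)^[w % q] ((⇑T.symm)^[w] ((⇑T)^[w] b))) = f₀ ((⇑T)^[w % q] b)
        rw [symm_iter_cancel]
      have he1 : (T.toEquiv ^ n) ω = (⇑T)^[l + n'] b := by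
        rw [hωb]
        exact zpow_iter_apply T n l (l + n') (by omega) b
      have he2 : (T.toEquiv ^ (n + (q : ℤ))) ω = (⇑T)^[l + n' + q] b := by
        rw [hωb]
        exact zpow_iter_apply T (n + q) l (l + n' + q) (by omega) b
      have he3 : (T.toEquiv ^ (n - (q : ℤ))) ω = (⇑T)^[l + n' - q] b := by
        rw [hωb]
        exact zpow_iter_apply T (n - q) l (l + n' - q) (by omega) b
      have hw1 : l + n' < m * q := by omega
      have hw2 : l + n' + q < m * q := by omega
      have hw3 : l + n' - q < m * q := by omega
      constructor
      · rw [he1, he2, hgval _ hw1, hgval _ hw2]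
        congr 2
        exact Nat.add_mod_right _ _
      · rw [he1, he3, hgval _ hw1, hgval _ hw3]
        congr 2
        have hsplit : l + n' = (l + n' - q) + q := by omega
        conv_rhs => rw [hsplit]
        rw [Nat.add_mod_right]

end USet

end GordonMRP

/-- **Theorem 2 (metric version).** If the minimal homeomorphism `T` of the infinite
compact metric space `Ω` with ergodic measure `μ` satisfies (MRP), then for a residual
set of `f ∈ C(Ω, ℝ)` there is a full `μ`-measure Borel set of `ω ∈ Ω` such that
`n ↦ f (Tⁿ ω)` is a Gordon potential. -/
theorem generic_gordon_of_MRP {Ω : Type*} [MetricSpace Ω] [CompactSpace Ω] [Infinite Ω]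
    [MeasurableSpace Ω] [BorelSpace Ω]
    (T : Ω ≃ₜ Ω)
    (hmin : ∀ ω : Ω, Dense (Set.range fun n : ℤ => (T.toEquiv ^ n) ω))
    (μ : Measure Ω) [IsProbabilityMeasure μ] (herg : Ergodic (⇑T) μ)
    (hMRP : 0 < μ (PRP (⇑T))) :
    ∃ F ∈ residual C(Ω, ℝ), ∀ f ∈ F, ∃ Ωf : Set Ω, MeasurableSet Ωf ∧ μ Ωf = 1 ∧
      ∀ ω ∈ Ωf, IsGordonPotential fun n : ℤ => f ((T.toEquiv ^ n) ω) := by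
  classical
  refine ⟨⋂ k : ℕ, GordonMRP.Uset T μ (k + 1), ?_, ?_⟩
  · exact countable_iInter_mem.mpr fun k =>
      residual_of_dense_open (GordonMRP.isOpen_Uset T μ (k + 1))
        (GordonMRP.dense_Uset T hmin μ herg hMRP (k + 1) (Nat.le_add_left 1 k))
  · intro f hf
    simp only [Set.mem_iInter] at hf
    choose g c G hc hfg hGm hGμ hprop using hf
    set Bad : Set Ω := ⋂ N : ℕ, ⋃ j : ℕ, (G (N + j))ᶜ with hBadDef
    have hBadm : MeasurableSet Bad :=
      MeasurableSet.iInter fun N => MeasurableSet.iUnion fun j => (hGm _).compl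
    have hBadle : ∀ N : ℕ, μ Bad ≤ (2 : ℝ≥0∞)⁻¹ ^ N := by
      intro N
      have h1 : μ Bad ≤ ∑' j : ℕ, μ (G (N + j))ᶜ :=
        le_trans (measure_mono (Set.iInter_subset _ N)) (measure_iUnion_le _)
      have h2 : ∑' j : ℕ, μ (G (N + j))ᶜ ≤ ∑' j : ℕ, (2 : ℝ≥0∞)⁻¹ ^ (N + 1) * (2 : ℝ≥0∞)⁻¹ ^ j := by
        refine ENNReal.tsum_le_tsum fun j => le_trans (hGμ _) ?_
        rw [← pow_add]
        exact le_of_eq (by ring_nf)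
      have h3 : ∑' j : ℕ, (2 : ℝ≥0∞)⁻¹ ^ (N + 1) * (2 : ℝ≥0∞)⁻¹ ^ j
          = (2 : ℝ≥0∞)⁻¹ ^ (N + 1) * 2 := by
        rw [ENNReal.tsum_mul_left, ENNReal.tsum_geometric]
        norm_num
      calc μ Bad ≤ (2 : ℝ≥0∞)⁻¹ ^ (N + 1) * 2 := by rw [← h3]; exact le_trans h1 h2
        _ = (2 : ℝ≥0∞)⁻¹ ^ N * ((2 : ℝ≥0∞)⁻¹ * 2) := by rw [pow_succ, mul_assoc]
        _ ≤ (2 : ℝ≥0∞)⁻¹ ^ N := by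
            rw [ENNReal.inv_mul_cancel (by norm_num) (by norm_num), mul_one]
    have hBad0 : μ Bad = 0 := by
      refine le_antisymm ?_ zero_le
      exact ge_of_tendsto
        (ENNReal.tendsto_pow_atTop_nhds_zero_of_lt_one
          (by norm_num : (2 : ℝ≥0∞)⁻¹ < 1))
        (Filter.Eventually.of_forall hBadle)
    refine ⟨Badᶜ, hBadm.compl, ?_, ?_⟩
    · rw [prob_compl_eq_one_sub hBadm, hBad0, tsub_zero]
    · intro ω hω
      rw [Set.mem_compl_iff, hBadDef, Set.mem_iInter] at hω
      push_neg at hω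
      obtain ⟨N, hN⟩ := hω
      simp only [Set.mem_iUnion, Set.mem_compl_iff, not_exists, not_not] at hN
      have hmem : ∀ j, N ≤ j → ω ∈ G j := by
        intro j hj
        have := hN (j - N)
        rwa [Nat.add_sub_cancel' hj] at this
      have key : ∀ k : ℕ, ∃ q : ℕ, (max k N) + 1 < q ∧
          2 * c (max k N) ≤ (((max k N : ℕ) + 1 : ℝ) ^ q)⁻¹ ∧
          ∀ n : ℤ, 1 ≤ n → n ≤ (q : ℤ) →
            g (max k N) ((T.toEquiv ^ (n + q)) ω) = g (max k N) ((T.toEquiv ^ n) ω) ∧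
            g (max k N) ((T.toEquiv ^ (n - q)) ω) = g (max k N) ((T.toEquiv ^ n) ω) := by
        intro k
        have h := hprop (max k N) ω (hmem _ (le_max_right k N))
        obtain ⟨q, hq1, hq2, hq3⟩ := h
        exact ⟨q, hq1, by exact_mod_cast hq2, hq3⟩
      choose Q hQ1 hQ2 hQ3 using key
      constructor
      · refine ⟨‖f‖, fun n => ?_⟩
        have := f.norm_coe_le_norm ((T.toEquiv ^ n) ω)
        rwa [Real.norm_eq_abs] at this
      · refine ⟨Q, ?_, ?_, ?_⟩
        · intro k
          have := hQ1 k
          omega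
        · refine tendsto_atTop_mono (fun k => ?_) tendsto_id
          have := hQ1 k
          simp only [id]
          omega
        · intro k hk n hn1 hn2
          set j := max k N with hj
          have hdist : ∀ x : Ω, |f x - g j x| ≤ dist f (g j) := by
            intro x
            have := ContinuousMap.dist_apply_le_dist (f := f) (g := g j) x
            rwa [Real.dist_eq] at this
          have hbase : ((k : ℝ) ^ Q k)⁻¹ ≥ (((j : ℕ) + 1 : ℝ) ^ Q k)⁻¹ := by
            apply inv_anti₀
            · positivity
            · apply pow_le_pow_left₀ (by positivity)
              have : (k : ℝ) ≤ (j : ℝ) + 1 := by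
                have : k ≤ j := le_max_left k N
                exact_mod_cast le_trans (Nat.cast_le.mpr this) (by linarith)
              exact this
          have h2c : 2 * dist f (g j) < 2 * c j := by
            have := hfg j
            linarith
          obtain ⟨he1, he2⟩ := hQ3 k n hn1 hn2
          constructor
          · have : |f ((T.toEquiv ^ n) ω) - f ((T.toEquiv ^ (n + Q k)) ω)|
                ≤ 2 * dist f (g j) := by
              have t1 := hdist ((T.toEquiv ^ n) ω)
              have t2 := hdist ((T.toEquiv ^ (n + Q k)) ω)
              rw [← he1] at t1
              calc |f ((T.toEquiv ^ n) ω) - f ((T.toEquiv ^ (n + Q k)) ω)|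
                  ≤ |f ((T.toEquiv ^ n) ω) - g j ((T.toEquiv ^ (n + Q k)) ω)|
                    + |f ((T.toEquiv ^ (n + Q k)) ω) - g j ((T.toEquiv ^ (n + Q k)) ω)| := by
                    rw [abs_sub_comm (f ((T.toEquiv ^ (n + Q k)) ω))] at *
                    exact abs_sub_le _ _ _ |>.trans (by rw [abs_sub_comm (g j _)])
                _ ≤ 2 * dist f (g j) := by linarith
            calc |f ((T.toEquiv ^ n) ω) - f ((T.toEquiv ^ (n + Q k)) ω)|
                ≤ 2 * dist f (g j) := this
              _ ≤ ((k : ℝ) ^ Q k)⁻¹ := le_trans (le_of_lt h2c) (le_trans (hQ2 k) hbase)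
          · have : |f ((T.toEquiv ^ n) ω) - f ((T.toEquiv ^ (n - Q k)) ω)|
                ≤ 2 * dist f (g j) := by
              have t1 := hdist ((T.toEquiv ^ n) ω)
              have t2 := hdist ((T.toEquiv ^ (n - Q k)) ω)
              rw [← he2] at t1
              calc |f ((T.toEquiv ^ n) ω) - f ((T.toEquiv ^ (n - Q k)) ω)|
                  ≤ |f ((T.toEquiv ^ n) ω) - g j ((T.toEquiv ^ (n - Q k)) ω)|
                    + |f ((T.toEquiv ^ (n - Q k)) ω) - g j ((T.toEquiv ^ (n - Q k)) ω)| := by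
                    rw [abs_sub_comm (f ((T.toEquiv ^ (n - Q k)) ω))] at *
                    exact abs_sub_le _ _ _ |>.trans (by rw [abs_sub_comm (g j _)])
                _ ≤ 2 * dist f (g j) := by linarith
            calc |f ((T.toEquiv ^ n) ω) - f ((T.toEquiv ^ (n - Q k)) ω)|
                ≤ 2 * dist f (g j) := this
              _ ≤ ((k : ℝ) ^ Q k)⁻¹ := le_trans (le_of_lt h2c) (le_trans (hQ2 k) hbase)
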